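/- Let v be an admissible weight function, let X = C_{0,v}(ℝ₊), and let 𝒯 = {T_t : t ≥ 0} be the semigroup of left translation operators on X. Then the following are equivalent: (1) sup{ v(x)/v(y) : 0 ≤ x ≤ y } = ∞; (2) there exists f ∈ X such that T_t f does not converge to 0 in norm as t → ∞; (3) 𝒯 is not uniformly bounded; (4) 𝒯 is not uniformly equicontinuous; (5) 𝒯 is not equicontinuous; (6) 𝒯 has nonzero topological entropy; (7) 𝒯 has infinite topological entropy. -/

import Mathlib

open MeasureTheory Filter Set
open scoped ENNReal

/-- Membership in `C_{0,v}(ℝ₊)`: continuous on `[0,∞)` with `|f x| * v x → 0` as `x → ∞`. -/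
def MemC0 (v : ℝ → ℝ) (f : ℝ → ℝ) : Prop :=
  ContinuousOn f (Set.Ici (0:ℝ)) ∧
    Filter.Tendsto (fun x => |f x| * v x) Filter.atTop (nhds 0)

/-- The norm on `C_{0,v}(ℝ₊)`: `‖f‖ = sup { |f x| * v x : x ≥ 0 }`. -/
noncomputable def c0Norm (v : ℝ → ℝ) (f : ℝ → ℝ) : ℝ :=
  sSup ((fun x => |f x| * v x) '' Set.Ici (0:ℝ))

/-- The left translation operator `(T_t f)(x) = f (x + t)`. -/
def translateW (t : ℝ) (f : ℝ → ℝ) : ℝ → ℝ := fun x => f (x + t)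

/-- `v` is an admissible weight function. -/
def AdmissibleWeight (v : ℝ → ℝ) : Prop :=
  (∀ x, 0 ≤ x → 0 < v x) ∧
  (∀ a, 0 ≤ a → IntegrableOn v (Set.Icc (0:ℝ) a)) ∧
  ∃ M, 1 ≤ M ∧ ∃ w, 0 ≤ w ∧ ∀ x, 0 ≤ x → ∀ t, 0 ≤ t →
    v x ≤ M * Real.exp (w * t) * v (x + t)

/-- The set `{ v x / v y : 0 ≤ x ≤ y }`. -/
def ratioSet (v : ℝ → ℝ) : Set ℝ := {r | ∃ x y, 0 ≤ x ∧ x ≤ y ∧ r = v x / v y}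

/-- `S` is a `(t,ε)`-separated set for the family `{T_u : u ≥ 0}` with respect to the
distance `d`: distinct points of `S` are `ε`-apart at some time `u ∈ [0,t]`. -/
def IsSepSet {X : Type*} (d : X → X → ℝ) (T : ℝ → X → X) (t ε : ℝ) (S : Set X) : Prop :=
  ∀ f ∈ S, ∀ g ∈ S, f ≠ g → ∃ u ∈ Set.Icc (0:ℝ) t, ε ≤ d (T u f) (T u g)

/-- The largest cardinality `s_{t,ε}(𝒯,K)` of a `(t,ε)`-separated subset of `K`
(as an extended natural number, viewed in `ℝ≥0∞`). -/
noncomputable def maxSep {X : Type*} (d : X → X → ℝ) (T : ℝ → X → X) (K : Set X)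
    (t ε : ℝ) : ℝ≥0∞ :=
  ⨆ (S : Finset X) (_ : ↑S ⊆ K ∧ IsSepSet d T t ε ↑S), (S.card : ℝ≥0∞)

open Classical in
/-- Extended-real logarithm of an extended nonnegative real. -/
noncomputable def elog (x : ℝ≥0∞) : EReal :=
  if x = ⊤ then ⊤ else ((Real.log x.toReal : ℝ) : EReal)

/-- The topological entropy `h(𝒯,K)` of the family `{T_u : u ≥ 0}` on the set `K`,
with respect to the distance `d`; since `ε ↦ limsup_t (1/t) log s_{t,ε}` is antitone,
the limit as `ε → 0⁺` is the supremum over `ε > 0`. -/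
noncomputable def entropyOn {X : Type*} (d : X → X → ℝ) (T : ℝ → X → X) (K : Set X) : EReal :=
  ⨆ (ε : ℝ) (_ : 0 < ε),
    Filter.limsup (fun t : ℝ => ((t⁻¹ : ℝ) : EReal) * elog (maxSep d T K t ε)) Filter.atTop

/-- Sequential compactness of a set with respect to a (pseudo)distance `d`; for metric
spaces this is equivalent to compactness. -/
def DSeqCompact {X : Type*} (d : X → X → ℝ) (K : Set X) : Prop :=
  ∀ u : ℕ → X, (∀ n, u n ∈ K) → ∃ g ∈ K, ∃ φ : ℕ → ℕ, StrictMono φ ∧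
    Filter.Tendsto (fun n => d (u (φ n)) g) Filter.atTop (nhds 0)

/-- The topological entropy `h(𝒯) = sup { h(𝒯,K) : K ⊆ A compact }` of the family
`{T_u : u ≥ 0}` on the space `A`, with respect to the distance `d`. -/
noncomputable def entropyFam {X : Type*} (d : X → X → ℝ) (T : ℝ → X → X) (A : Set X) : EReal :=
  ⨆ (K : Set X) (_ : K ⊆ A ∧ DSeqCompact d K), entropyOn d T K

namespace C0Aux

variable {v : ℝ → ℝ} {M w : ℝ}

/-- The set whose supremum is the norm. -/
def NSet (v f : ℝ → ℝ) : Set ℝ := (fun x => |f x| * v x) '' Set.Ici (0:ℝ)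

lemma c0Norm_def (f : ℝ → ℝ) : c0Norm v f = sSup (NSet v f) := rfl

lemma nset_nonneg (hpos : ∀ x, 0 ≤ x → 0 < v x) {f : ℝ → ℝ} {r : ℝ}
    (hr : r ∈ NSet v f) : 0 ≤ r := by
  obtain ⟨x, hx, rfl⟩ := hr
  exact mul_nonneg (abs_nonneg _) (hpos x hx).le

lemma c0Norm_nonneg (hpos : ∀ x, 0 ≤ x → 0 < v x) (f : ℝ → ℝ) : 0 ≤ c0Norm v f :=
  Real.sSup_nonneg (fun _ hr => nset_nonneg hpos hr)

lemma c0Norm_le {f : ℝ → ℝ} {b : ℝ} (hb : 0 ≤ b)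
    (h : ∀ x, 0 ≤ x → |f x| * v x ≤ b) : c0Norm v f ≤ b := by
  refine Real.sSup_le ?_ hb
  rintro r ⟨x, hx, rfl⟩
  exact h x hx

lemma le_c0Norm {f : ℝ → ℝ} (hbdd : BddAbove (NSet v f)) {x : ℝ} (hx : 0 ≤ x) :
    |f x| * v x ≤ c0Norm v f := le_csSup hbdd ⟨x, hx, rfl⟩

/-- Local boundedness of an admissible weight. -/
lemma vsup (hpos : ∀ x, 0 ≤ x → 0 < v x)
    (hint : ∀ a, 0 ≤ a → IntegrableOn v (Set.Icc (0:ℝ) a))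
    (hM : 1 ≤ M) (hw : 0 ≤ w)
    (hgrow : ∀ x, 0 ≤ x → ∀ t, 0 ≤ t → v x ≤ M * Real.exp (w * t) * v (x + t))
    (a : ℝ) : ∃ C, 0 < C ∧ ∀ x, 0 ≤ x → x ≤ a → v x ≤ C := by
  rcases lt_or_ge a 0 with ha | ha
  · exact ⟨1, one_pos, fun x hx hxa => absurd (hxa.trans_lt ha) (not_lt.2 hx)⟩
  have hMew : (0:ℝ) < M * Real.exp w := by positivity
  set I : ℝ := ∫ y in Set.Icc (0:ℝ) (a+1), v y with hI
  refine ⟨max (M * Real.exp w * I) 1, lt_of_lt_of_le one_pos (le_max_right _ _), ?_⟩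
  intro x hx hxa
  have hsub : Set.Icc x (x+1) ⊆ Set.Icc (0:ℝ) (a+1) :=
    Set.Icc_subset_Icc hx (by linarith)
  have hint' : IntegrableOn v (Set.Icc (0:ℝ) (a+1)) := hint (a+1) (by linarith)
  have hintx : IntegrableOn v (Set.Icc x (x+1)) := hint'.mono_set hsub
  have h1 : ∫ _y in Set.Icc x (x+1), (v x / (M * Real.exp w)) ≤ ∫ y in Set.Icc x (x+1), v y := by
    refine setIntegral_mono_on (integrableOn_const measure_Icc_lt_top.ne) hintx
      measurableSet_Icc ?_
    intro y hy
    have hyx : 0 ≤ y - x := by linarith [hy.1]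
    have := hgrow x hx (y - x) hyx
    rw [add_sub_cancel] at this
    have hexp : Real.exp (w * (y - x)) ≤ Real.exp w := by
      apply Real.exp_le_exp.2
      nlinarith [hy.2]
    have hvy : 0 < v y := hpos y (by linarith [hy.1])
    rw [div_le_iff₀ hMew]
    calc v x ≤ M * Real.exp (w * (y-x)) * v y := this
      _ ≤ M * Real.exp w * v y := by
          have hM0 : (0:ℝ) ≤ M := le_trans zero_le_one hM
          gcongr
      _ = v y * (M * Real.exp w) := by ring
  have h2 : ∫ y in Set.Icc x (x+1), v y ≤ I := by
    refine setIntegral_mono_set hint' ?_ hsub.eventuallyLE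
    exact ae_restrict_of_forall_mem measurableSet_Icc (fun y hy => (hpos y hy.1).le)
  have h3 : ∫ _y in Set.Icc x (x+1), (v x / (M * Real.exp w)) = v x / (M * Real.exp w) := by
    rw [setIntegral_const]
    rw [Real.volume_real_Icc]
    norm_num
  have : v x / (M * Real.exp w) ≤ I := by
    rw [h3] at h1; exact h1.trans h2
  have : v x ≤ M * Real.exp w * I := by
    rw [div_le_iff₀ hMew] at this; linarith [this]
  exact this.trans (le_max_left _ _)

/-- Lower bound for `v` on `[0,a]`. -/
lemma vlow (hpos : ∀ x, 0 ≤ x → 0 < v x) (hM : 1 ≤ M) (hw : 0 ≤ w)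
    (hgrow : ∀ x, 0 ≤ x → ∀ t, 0 ≤ t → v x ≤ M * Real.exp (w * t) * v (x + t))
    {a x : ℝ} (hx : 0 ≤ x) (hxa : x ≤ a) :
    v 0 / (M * Real.exp (w * a)) ≤ v x := by
  have h := hgrow 0 le_rfl x hx
  rw [zero_add] at h
  have hexp : Real.exp (w * x) ≤ Real.exp (w * a) :=
    Real.exp_le_exp.2 (by nlinarith)
  have hvx := hpos x hx
  have hden : (0:ℝ) < M * Real.exp (w * a) := by positivity
  rw [div_le_iff₀ hden]
  calc v 0 ≤ M * Real.exp (w * x) * v x := h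
    _ ≤ M * Real.exp (w * a) * v x := by
        have hM0 : (0:ℝ) ≤ M := le_trans zero_le_one hM
        gcongr
    _ = v x * (M * Real.exp (w*a)) := by ring

/-- Boundedness of the norm set for a `C_{0,v}` function. -/
lemma bddAbove_nset (hpos : ∀ x, 0 ≤ x → 0 < v x)
    (hb : ∀ a : ℝ, ∃ C, 0 < C ∧ ∀ x, 0 ≤ x → x ≤ a → v x ≤ C)
    {f : ℝ → ℝ} (hf : MemC0 v f) : BddAbove (NSet v f) := by
  obtain ⟨a, ha⟩ := (Metric.tendsto_atTop.1 hf.2) 1 one_pos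
  set a' : ℝ := max a 0 with ha'
  obtain ⟨Cf, hCf⟩ := isCompact_Icc.exists_bound_of_continuousOn
    (hf.1.mono (Set.Icc_subset_Ici_self : Set.Icc (0:ℝ) a' ⊆ Set.Ici 0))
  obtain ⟨Cv, hCv0, hCv⟩ := hb a'
  refine ⟨max 1 (Cf * Cv), ?_⟩
  rintro r ⟨x, hx, rfl⟩
  simp only [Set.mem_Ici] at hx
  rcases le_or_gt x a' with hxa | hxa
  · have h1 : |f x| ≤ Cf := by
      have := hCf x ⟨hx, hxa⟩
      rwa [Real.norm_eq_abs] at this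
    have h2 : v x ≤ Cv := hCv x hx hxa
    have : |f x| * v x ≤ Cf * Cv :=
      mul_le_mul h1 h2 (hpos x hx).le ((abs_nonneg _).trans h1)
    exact this.trans (le_max_right _ _)
  · have hxa2 : a ≤ x := le_trans (le_max_left a 0) hxa.le
    have := ha x hxa2
    rw [Real.dist_eq, sub_zero] at this
    have habs : |f x| * v x ≤ 1 := by
      have hnn : 0 ≤ |f x| * v x := mul_nonneg (abs_nonneg _) (hpos x hx).le
      rw [abs_of_nonneg hnn] at this
      exact this.le
    exact habs.trans (le_max_left _ _)

end C0Aux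
namespace C0Aux

variable {v : ℝ → ℝ} {M w : ℝ}

lemma memC0_zero : MemC0 v (0 : ℝ → ℝ) := by
  constructor
  · exact continuousOn_const
  · have : (fun x : ℝ => |(0:ℝ→ℝ) x| * v x) = fun _ => 0 := by
      funext x; simp
    rw [this]
    exact tendsto_const_nhds

lemma MemC0.sub' (hpos : ∀ x, 0 ≤ x → 0 < v x) {f g : ℝ → ℝ}
    (hf : MemC0 v f) (hg : MemC0 v g) : MemC0 v (f - g) := by
  constructor
  · exact hf.1.sub hg.1
  · refine squeeze_zero' (g := fun x => |f x| * v x + |g x| * v x) ?_ ?_ ?_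
    · filter_upwards [Filter.eventually_ge_atTop (0:ℝ)] with x hx
      exact mul_nonneg (abs_nonneg _) (hpos x hx).le
    · filter_upwards [Filter.eventually_ge_atTop (0:ℝ)] with x hx
      have : |(f - g) x| ≤ |f x| + |g x| := by
        simpa using abs_sub (f x) (g x)
      calc |(f-g) x| * v x ≤ (|f x| + |g x|) * v x :=
            mul_le_mul_of_nonneg_right this (hpos x hx).le
        _ = |f x| * v x + |g x| * v x := by ring
    · have := hf.2.add hg.2
      simpa using this

lemma MemC0.smul' {f : ℝ → ℝ} (hf : MemC0 v f) (c : ℝ) :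
    MemC0 v (fun x => c * f x) := by
  constructor
  · exact continuousOn_const.mul hf.1
  · have : (fun x => |c * f x| * v x) = fun x => |c| * (|f x| * v x) := by
      funext x; rw [abs_mul]; ring
    rw [this]
    simpa using hf.2.const_mul |c|

lemma MemC0.translate' (hpos : ∀ x, 0 ≤ x → 0 < v x) (hM : 1 ≤ M) (hw : 0 ≤ w)
    (hgrow : ∀ x, 0 ≤ x → ∀ t, 0 ≤ t → v x ≤ M * Real.exp (w * t) * v (x + t))
    {f : ℝ → ℝ} (hf : MemC0 v f) {t : ℝ} (ht : 0 ≤ t) :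
    MemC0 v (translateW t f) := by
  constructor
  · have hmaps : Set.MapsTo (fun x : ℝ => x + t) (Set.Ici (0:ℝ)) (Set.Ici (0:ℝ)) := by
      intro x hx
      simp only [Set.mem_Ici] at hx ⊢
      linarith
    exact hf.1.comp (Continuous.continuousOn (by continuity)) hmaps
  · refine squeeze_zero'
      (g := fun x => M * Real.exp (w * t) * (|f (x+t)| * v (x+t))) ?_ ?_ ?_
    · filter_upwards [Filter.eventually_ge_atTop (0:ℝ)] with x hx
      exact mul_nonneg (abs_nonneg _) (hpos x hx).le
    · filter_upwards [Filter.eventually_ge_atTop (0:ℝ)] with x hx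
      show |f (x + t)| * v x ≤ M * Real.exp (w * t) * (|f (x+t)| * v (x+t))
      have h := hgrow x hx t ht
      calc |f (x+t)| * v x ≤ |f (x+t)| * (M * Real.exp (w*t) * v (x+t)) :=
            mul_le_mul_of_nonneg_left h (abs_nonneg _)
        _ = M * Real.exp (w * t) * (|f (x+t)| * v (x+t)) := by ring
    · have hcomp : Filter.Tendsto (fun x : ℝ => x + t) Filter.atTop Filter.atTop :=
        Filter.tendsto_atTop_add_const_right _ t Filter.tendsto_id
      have := (hf.2.comp hcomp).const_mul (M * Real.exp (w * t))
      simpa using this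

lemma translate_sub (t : ℝ) (f g : ℝ → ℝ) :
    translateW t f - translateW t g = translateW t (f - g) := rfl

lemma translate_zero (t : ℝ) : translateW t (0 : ℝ → ℝ) = 0 := rfl

lemma translate_smul (t c : ℝ) (f : ℝ → ℝ) :
    translateW t (fun x => c * f x) = fun x => c * translateW t f x := rfl

lemma c0Norm_smul_le (hpos : ∀ x, 0 ≤ x → 0 < v x)
    (hb : ∀ a : ℝ, ∃ C, 0 < C ∧ ∀ x, 0 ≤ x → x ≤ a → v x ≤ C)
    {f : ℝ → ℝ} (hf : MemC0 v f) (c : ℝ) :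
    c0Norm v (fun x => c * f x) ≤ |c| * c0Norm v f := by
  refine c0Norm_le (mul_nonneg (abs_nonneg _) (c0Norm_nonneg hpos f)) ?_
  intro x hx
  have : |c * f x| * v x = |c| * (|f x| * v x) := by rw [abs_mul]; ring
  rw [this]
  exact mul_le_mul_of_nonneg_left (le_c0Norm (bddAbove_nset hpos hb hf) hx) (abs_nonneg _)

lemma c0Norm_smul_ge (hpos : ∀ x, 0 ≤ x → 0 < v x)
    (hb : ∀ a : ℝ, ∃ C, 0 < C ∧ ∀ x, 0 ≤ x → x ≤ a → v x ≤ C)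
    {f : ℝ → ℝ} (hf : MemC0 v f) {c : ℝ} (hc : c ≠ 0) :
    |c| * c0Norm v f ≤ c0Norm v (fun x => c * f x) := by
  have h2 : c0Norm v f ≤ |c|⁻¹ * c0Norm v (fun x => c * f x) := by
    have heq : (fun x => c⁻¹ * (c * f x)) = f := by
      funext x; field_simp
    have := c0Norm_smul_le hpos hb (MemC0.smul' hf c) c⁻¹
    rw [heq, abs_inv] at this
    exact this
  have hc' : (0:ℝ) < |c| := abs_pos.2 hc
  calc |c| * c0Norm v f ≤ |c| * (|c|⁻¹ * c0Norm v (fun x => c * f x)) :=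
        mul_le_mul_of_nonneg_left h2 hc'.le
    _ = c0Norm v (fun x => c * f x) := by field_simp

end C0Aux
namespace C0Aux

variable {v : ℝ → ℝ} {M w : ℝ}

/-- If ratios are bounded by `R`, the semigroup is uniformly bounded by `R`. -/
lemma ub_of_ratio_bdd (hpos : ∀ x, 0 ≤ x → 0 < v x)
    (hb : ∀ a : ℝ, ∃ C, 0 < C ∧ ∀ x, 0 ≤ x → x ≤ a → v x ≤ C)
    {R : ℝ} (hR : ∀ x y, 0 ≤ x → x ≤ y → v x ≤ R * v y)
    {f : ℝ → ℝ} (hf : MemC0 v f) {t : ℝ} (ht : 0 ≤ t) :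
    c0Norm v (translateW t f) ≤ R * c0Norm v f := by
  have hR0 : 0 ≤ R := by
    have h0 := hR 0 0 le_rfl le_rfl
    have := hpos 0 le_rfl
    nlinarith
  refine c0Norm_le (mul_nonneg hR0 (c0Norm_nonneg hpos f)) ?_
  intro x hx
  have h1 : v x ≤ R * v (x + t) := hR x (x+t) hx (by linarith)
  calc |translateW t f x| * v x ≤ |f (x+t)| * (R * v (x+t)) :=
        mul_le_mul_of_nonneg_left h1 (abs_nonneg _)
    _ = R * (|f (x+t)| * v (x+t)) := by ring
    _ ≤ R * c0Norm v f :=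
        mul_le_mul_of_nonneg_left (le_c0Norm (bddAbove_nset hpos hb hf) (by linarith)) hR0

/-- If ratios are bounded by `R`, every orbit tends to 0. -/
lemma orbit_tendsto_zero_of_ratio_bdd (hpos : ∀ x, 0 ≤ x → 0 < v x)
    {R : ℝ} (hR0 : 0 < R) (hR : ∀ x y, 0 ≤ x → x ≤ y → v x ≤ R * v y)
    {f : ℝ → ℝ} (hf : MemC0 v f) :
    Filter.Tendsto (fun t => c0Norm v (translateW t f)) Filter.atTop (nhds 0) := by
  rw [Metric.tendsto_atTop]
  intro ε hε
  obtain ⟨a, ha⟩ := (Metric.tendsto_atTop.1 hf.2) (ε / (2 * R)) (by positivity)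
  refine ⟨max a 0, fun t htt => ?_⟩
  have ht0 : (0:ℝ) ≤ t := le_trans (le_max_right a 0) htt
  have hta : a ≤ t := le_trans (le_max_left a 0) htt
  have hnorm : c0Norm v (translateW t f) ≤ ε / 2 := by
    refine c0Norm_le (by positivity) ?_
    intro x hx
    have hxta : a ≤ x + t := by linarith
    have h2 := ha (x + t) hxta
    rw [Real.dist_eq, sub_zero] at h2
    have hnn : 0 ≤ |f (x+t)| * v (x+t) :=
      mul_nonneg (abs_nonneg _) (hpos (x+t) (by linarith)).le
    rw [abs_of_nonneg hnn] at h2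
    have h1 : v x ≤ R * v (x + t) := hR x (x+t) hx (by linarith)
    calc |translateW t f x| * v x ≤ |f (x+t)| * (R * v (x+t)) :=
          mul_le_mul_of_nonneg_left h1 (abs_nonneg _)
      _ = R * (|f (x+t)| * v (x+t)) := by ring
      _ ≤ R * (ε / (2 * R)) := mul_le_mul_of_nonneg_left h2.le hR0.le
      _ = ε / 2 := by field_simp
  have hnn : 0 ≤ c0Norm v (translateW t f) := c0Norm_nonneg hpos _
  rw [Real.dist_eq, sub_zero, abs_of_nonneg hnn]
  linarith

/-- Negation of (1) yields a uniform ratio bound. -/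
lemma ratio_bdd_of_not_one (hpos : ∀ x, 0 ≤ x → 0 < v x)
    (h : ¬ (∀ B : ℝ, ∃ r ∈ ratioSet v, B < r)) :
    ∃ R : ℝ, 0 < R ∧ ∀ x y, 0 ≤ x → x ≤ y → v x ≤ R * v y := by
  push_neg at h
  obtain ⟨B, hB⟩ := h
  refine ⟨max B 1, lt_of_lt_of_le one_pos (le_max_right _ _), ?_⟩
  intro x y hx hxy
  have hmem : v x / v y ∈ ratioSet v := ⟨x, y, hx, hxy, rfl⟩
  have := hB _ hmem
  have hy : 0 < v y := hpos y (le_trans hx hxy)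
  have h1 : v x / v y ≤ max B 1 := le_trans this (le_max_left _ _)
  rw [div_le_iff₀ hy] at h1
  linarith [h1]

/-- Uniform boundedness implies uniform equicontinuity. -/
lemma uec_of_ub (hpos : ∀ x, 0 ≤ x → 0 < v x)
    (hub : ∃ B : ℝ, 0 ≤ B ∧ ∀ f, MemC0 v f → ∀ t, 0 ≤ t →
      c0Norm v (translateW t f) ≤ B * c0Norm v f) :
    ∀ ε > (0:ℝ), ∃ δ > (0:ℝ), ∀ t, 0 ≤ t → ∀ f g, MemC0 v f → MemC0 v g →
      c0Norm v (f - g) < δ → c0Norm v (translateW t f - translateW t g) < ε := by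
  obtain ⟨B, hB0, hB⟩ := hub
  intro ε hε
  refine ⟨ε / (B + 1), by positivity, ?_⟩
  intro t ht f g hf hg hfg
  rw [translate_sub]
  have h1 : c0Norm v (translateW t (f - g)) ≤ B * c0Norm v (f - g) :=
    hB _ (MemC0.sub' hpos hf hg) t ht
  have h2 : B * c0Norm v (f - g) ≤ B * (ε / (B+1)) :=
    mul_le_mul_of_nonneg_left hfg.le hB0
  have h3 : B * (ε / (B+1)) < ε := by
    rw [mul_div_assoc']
    rw [div_lt_iff₀ (by positivity)]
    nlinarith
  linarith

/-- Uniform equicontinuity implies uniform boundedness. -/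
lemma ub_of_uec (hpos : ∀ x, 0 ≤ x → 0 < v x)
    (hb : ∀ a : ℝ, ∃ C, 0 < C ∧ ∀ x, 0 ≤ x → x ≤ a → v x ≤ C)
    (hM : 1 ≤ M) (hw : 0 ≤ w)
    (hgrow : ∀ x, 0 ≤ x → ∀ t, 0 ≤ t → v x ≤ M * Real.exp (w * t) * v (x + t))
    (huec : ∀ ε > (0:ℝ), ∃ δ > (0:ℝ), ∀ t, 0 ≤ t → ∀ f g, MemC0 v f → MemC0 v g →
      c0Norm v (f - g) < δ → c0Norm v (translateW t f - translateW t g) < ε) :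
    ∃ B : ℝ, 0 ≤ B ∧ ∀ f, MemC0 v f → ∀ t, 0 ≤ t →
      c0Norm v (translateW t f) ≤ B * c0Norm v f := by
  obtain ⟨δ, hδ, hδ'⟩ := huec 1 one_pos
  refine ⟨2 / δ, by positivity, ?_⟩
  intro f hf t ht
  -- key: for every c > 0 with c * ‖f‖ < δ we get c * ‖T_t f‖ ≤ 1
  have key : ∀ c : ℝ, 0 < c → c * c0Norm v f < δ → c * c0Norm v (translateW t f) ≤ 1 := by
    intro c hc hcf
    have hmem : MemC0 v (fun x => c * f x) := MemC0.smul' hf c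
    have hlt : c0Norm v ((fun x => c * f x) - 0) < δ := by
      have : ((fun x => c * f x) - 0) = (fun x => c * f x) := by funext x; simp
      rw [this]
      have := c0Norm_smul_le hpos hb hf c
      rw [abs_of_pos hc] at this
      linarith [this, hcf]
    have := hδ' t ht _ 0 hmem memC0_zero hlt
    rw [translate_zero] at this
    have heq : translateW t (fun x => c * f x) - 0 = fun x => c * translateW t f x := by
      funext x; simp [translateW]
    rw [heq] at this
    have hge := c0Norm_smul_ge hpos hb
      (MemC0.translate' hpos hM hw hgrow hf ht) (ne_of_gt hc)
    rw [abs_of_pos hc] at hge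
    linarith
  rcases eq_or_lt_of_le (c0Norm_nonneg hpos f) with h0 | h0
  · -- ‖f‖ = 0 : show ‖T_t f‖ ≤ 0
    have : ∀ n : ℕ, c0Norm v (translateW t f) ≤ 1 / (n+1) := by
      intro n
      have hc : (0:ℝ) < (n+1) := by positivity
      have := key (n+1) hc (by rw [← h0]; simpa using hδ)
      rw [mul_comm] at this
      rw [le_div_iff₀ hc]
      linarith
    have hle : c0Norm v (translateW t f) ≤ 0 := by
      by_contra hcon
      push_neg at hcon
      obtain ⟨n, hn⟩ := exists_nat_one_div_lt hcon
      have := this n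
      have hn' : 1 / ((n:ℝ)+1) < c0Norm v (translateW t f) := hn
      linarith
    calc c0Norm v (translateW t f) ≤ 0 := hle
      _ ≤ 2/δ * c0Norm v f := by positivity
  · -- ‖f‖ > 0
    set c : ℝ := δ / (2 * c0Norm v f) with hc
    have hc0 : 0 < c := by positivity
    have hcf : c * c0Norm v f < δ := by
      have heq : c * c0Norm v f = δ / 2 := by
        rw [hc]
        field_simp
      rw [heq]
      linarith
    have := key c hc0 hcf
    rw [hc] at this
    have h2 : c0Norm v (translateW t f) ≤ (2 * c0Norm v f) / δ := by
      rw [le_div_iff₀ hδ]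
      have hexp : δ / (2 * c0Norm v f) * c0Norm v (translateW t f) ≤ 1 := this
      have h3 : (0:ℝ) < 2 * c0Norm v f := by positivity
      calc c0Norm v (translateW t f) * δ
          = (δ / (2 * c0Norm v f) * c0Norm v (translateW t f)) * (2 * c0Norm v f) := by
            field_simp
        _ ≤ 1 * (2 * c0Norm v f) := by
            exact mul_le_mul_of_nonneg_right hexp h3.le
        _ = 2 * c0Norm v f := one_mul _
    calc c0Norm v (translateW t f) ≤ (2 * c0Norm v f) / δ := h2
      _ = 2/δ * c0Norm v f := by ring

end C0Aux
namespace C0Aux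

variable {v : ℝ → ℝ} {M w : ℝ}

lemma c0Norm_sub_comm (f g : ℝ → ℝ) : c0Norm v (f - g) = c0Norm v (g - f) := by
  unfold c0Norm
  congr 1
  have : (fun x => |(f - g) x| * v x) = fun x => |(g - f) x| * v x := by
    funext x
    simp only [Pi.sub_apply]
    rw [abs_sub_comm]
  rw [this]

lemma c0Norm_sub_triangle (hpos : ∀ x, 0 ≤ x → 0 < v x)
    (hb : ∀ a : ℝ, ∃ C, 0 < C ∧ ∀ x, 0 ≤ x → x ≤ a → v x ≤ C)
    {f g h : ℝ → ℝ} (hf : MemC0 v f) (hg : MemC0 v g) (hh : MemC0 v h) :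
    c0Norm v (f - h) ≤ c0Norm v (f - g) + c0Norm v (g - h) := by
  refine c0Norm_le (add_nonneg (c0Norm_nonneg hpos _) (c0Norm_nonneg hpos _)) ?_
  intro x hx
  have h1 : |(f - h) x| ≤ |(f - g) x| + |(g - h) x| := by
    simp only [Pi.sub_apply]
    exact abs_sub_le (f x) (g x) (h x)
  calc |(f-h) x| * v x ≤ (|(f-g) x| + |(g-h) x|) * v x :=
        mul_le_mul_of_nonneg_right h1 (hpos x hx).le
    _ = |(f-g) x| * v x + |(g-h) x| * v x := by ring
    _ ≤ c0Norm v (f - g) + c0Norm v (g - h) :=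
        add_le_add (le_c0Norm (bddAbove_nset hpos hb (MemC0.sub' hpos hf hg)) hx)
          (le_c0Norm (bddAbove_nset hpos hb (MemC0.sub' hpos hg hh)) hx)

/-- Total boundedness of a `d`-sequentially-compact subset of `C_{0,v}`. -/
lemma exists_cover (hpos : ∀ x, 0 ≤ x → 0 < v x)
    (hb : ∀ a : ℝ, ∃ C, 0 < C ∧ ∀ x, 0 ≤ x → x ≤ a → v x ≤ C)
    {K : Set (ℝ → ℝ)} (hKA : K ⊆ {f | MemC0 v f})
    (hKc : DSeqCompact (fun f g => c0Norm v (f - g)) K)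
    {ε : ℝ} (hε : 0 < ε) :
    ∃ F : Finset (ℝ → ℝ), ↑F ⊆ K ∧ ∀ g ∈ K, ∃ c ∈ F, c0Norm v (c - g) < ε := by
  by_contra hcon
  push_neg at hcon
  have hstep : ∀ s : Finset (ℝ → ℝ), (∀ x ∈ s, x ∈ K) →
      ∃ y, y ∈ K ∧ ∀ x ∈ s, ε ≤ c0Norm v (x - y) := by
    intro s hs
    obtain ⟨g, hgK, hg⟩ := hcon s (fun x hx => hs x hx)
    exact ⟨g, hgK, hg⟩
  obtain ⟨u, huK, husep⟩ := exists_seq_of_forall_finset_exists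
    (fun x => x ∈ K) (fun x y => ε ≤ c0Norm v (x - y)) hstep
  obtain ⟨g, hgK, φ, hφ, hconv⟩ := hKc u huK
  obtain ⟨N, hN⟩ := (Metric.tendsto_atTop.1 hconv) (ε/2) (by positivity)
  have h1 := hN N le_rfl
  have h2 := hN (N+1) (by omega)
  rw [Real.dist_eq, sub_zero] at h1 h2
  have hnn1 : 0 ≤ c0Norm v (u (φ N) - g) := c0Norm_nonneg hpos _
  have hnn2 : 0 ≤ c0Norm v (u (φ (N+1)) - g) := c0Norm_nonneg hpos _
  rw [abs_of_nonneg hnn1] at h1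
  rw [abs_of_nonneg hnn2] at h2
  have hsep := husep (φ N) (φ (N+1)) (hφ (by omega))
  have htri : c0Norm v (u (φ N) - u (φ (N+1))) ≤
      c0Norm v (u (φ N) - g) + c0Norm v (g - u (φ (N+1))) :=
    c0Norm_sub_triangle hpos hb (hKA (huK (φ N))) (hKA hgK) (hKA (huK (φ (N+1))))
  rw [c0Norm_sub_comm g (u (φ (N+1)))] at htri
  linarith

lemma elog_zero : elog 0 = 0 := by
  unfold elog
  rw [if_neg (by simp)]
  simp

lemma elog_le_of_le {x : ℝ≥0∞} {N : ℕ} (hx : x ≤ (N : ℝ≥0∞)) :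
    elog x ≤ ((Real.log (N+1) : ℝ) : EReal) := by
  have hxt : x ≠ ⊤ := ne_top_of_le_ne_top (by simp) hx
  unfold elog
  rw [if_neg hxt]
  rw [EReal.coe_le_coe_iff]
  have htr : x.toReal ≤ (N:ℝ) := by
    have := ENNReal.toReal_mono (by simp) hx
    simpa using this
  rcases eq_or_lt_of_le (ENNReal.toReal_nonneg (a := x)) with h0 | h0
  · rw [← h0, Real.log_zero]
    exact Real.log_nonneg (by push_cast; linarith)
  · exact Real.log_le_log h0 (by push_cast; linarith)

lemma maxSep_le_of_card_le {X : Type*} {d : X → X → ℝ} {T : ℝ → X → X} {K : Set X}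
    {t ε : ℝ} {N : ℕ}
    (h : ∀ S : Finset X, ↑S ⊆ K → IsSepSet d T t ε ↑S → S.card ≤ N) :
    maxSep d T K t ε ≤ (N : ℝ≥0∞) := by
  refine iSup₂_le ?_
  intro S hS
  exact_mod_cast Nat.cast_le.2 (h S hS.1 hS.2)

lemma maxSep_empty {X : Type*} (d : X → X → ℝ) (T : ℝ → X → X) (t ε : ℝ) :
    maxSep d T (∅ : Set X) t ε = 0 := by
  refine le_antisymm ?_ zero_le
  refine iSup₂_le ?_
  intro S hS
  have : S = ∅ := Finset.coe_eq_empty.1 (Set.subset_empty_iff.1 hS.1)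
  simp [this]

lemma DSeqCompact_empty {X : Type*} [Nonempty X] (d : X → X → ℝ) :
    DSeqCompact d (∅ : Set X) := by
  intro u hu
  exact absurd (hu 0) (Set.notMem_empty _)

lemma entropyOn_empty {X : Type*} (d : X → X → ℝ) (T : ℝ → X → X) :
    entropyOn d T (∅ : Set X) = 0 := by
  unfold entropyOn
  have hterm : ∀ ε : ℝ, (fun t : ℝ => ((t⁻¹ : ℝ) : EReal) * elog (maxSep d T ∅ t ε))
      = fun _ => (0 : EReal) := by
    intro ε
    funext t
    rw [maxSep_empty, elog_zero, mul_zero]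
  refine le_antisymm ?_ ?_
  · refine iSup₂_le ?_
    intro ε hε
    rw [hterm ε, Filter.limsup_const]
  · have h1 : (0:EReal) = Filter.limsup
        (fun t : ℝ => ((t⁻¹ : ℝ) : EReal) * elog (maxSep d T ∅ t 1)) Filter.atTop := by
      rw [hterm 1, Filter.limsup_const]
    rw [h1]
    exact le_iSup₂ (f := fun (ε:ℝ) (_ : 0 < ε) => Filter.limsup
      (fun t : ℝ => ((t⁻¹ : ℝ) : EReal) * elog (maxSep d T ∅ t ε)) Filter.atTop) 1 one_pos

end C0Aux
namespace C0Aux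

variable {v : ℝ → ℝ}

lemma entropyFam_zero_of_ub (hpos : ∀ x, 0 ≤ x → 0 < v x)
    (hb : ∀ a : ℝ, ∃ C, 0 < C ∧ ∀ x, 0 ≤ x → x ≤ a → v x ≤ C)
    (hub : ∃ B : ℝ, 0 ≤ B ∧ ∀ f, MemC0 v f → ∀ t, 0 ≤ t →
      c0Norm v (translateW t f) ≤ B * c0Norm v f) :
    entropyFam (fun f g => c0Norm v (f - g)) translateW {f | MemC0 v f} = 0 := by
  classical
  obtain ⟨B, hB0, hB⟩ := hub
  set d : (ℝ→ℝ) → (ℝ→ℝ) → ℝ := fun f g => c0Norm v (f - g) with hd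
  refine le_antisymm ?_ ?_
  · refine iSup₂_le ?_
    rintro K ⟨hKA, hKc⟩
    refine iSup₂_le ?_
    intro ε hε
    obtain ⟨F, hFK, hFcov⟩ := exists_cover hpos hb hKA hKc
      (ε := ε/(2*(B+1))) (by positivity)
    set N := F.card with hN
    have hcard : ∀ (t : ℝ) (S : Finset (ℝ→ℝ)), ↑S ⊆ K → IsSepSet d translateW t ε ↑S →
        S.card ≤ N := by
      intro t S hSK hsep
      set pk : (ℝ→ℝ) → (ℝ→ℝ) := fun x =>
        if h : ∃ c, c ∈ F ∧ c0Norm v (c - x) < ε/(2*(B+1)) then h.choose else x with hpk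
      have hex : ∀ x ∈ S, ∃ c, c ∈ F ∧ c0Norm v (c - x) < ε/(2*(B+1)) := by
        intro x hx
        obtain ⟨c, hcF, hc⟩ := hFcov x (hSK hx)
        exact ⟨c, hcF, hc⟩
      have hmaps : ∀ x ∈ S, pk x ∈ F := by
        intro x hx
        rw [hpk]
        simp only [dif_pos (hex x hx)]
        exact (hex x hx).choose_spec.1
      have hdist : ∀ x ∈ S, c0Norm v (pk x - x) < ε/(2*(B+1)) := by
        intro x hx
        rw [hpk]
        simp only [dif_pos (hex x hx)]
        exact (hex x hx).choose_spec.2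
      have hinj : Set.InjOn pk ↑S := by
        intro x hxS y hyS hxy
        by_contra hne
        have hxS' : x ∈ S := hxS
        have hyS' : y ∈ S := hyS
        have hxK := hSK hxS'
        have hyK := hSK hyS'
        have hpkmem : MemC0 v (pk x) := hKA (hFK (hmaps x hxS'))
        have hdx := hdist x hxS'
        have hdy := hdist y hyS'
        rw [← hxy] at hdy
        have htri : c0Norm v (x - y) ≤ c0Norm v (x - pk x) + c0Norm v (pk x - y) :=
          c0Norm_sub_triangle hpos hb (hKA hxK) hpkmem (hKA hyK)
        rw [c0Norm_sub_comm x (pk x)] at htri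
        have hxy' : c0Norm v (x - y) < ε/(B+1) := by
          have : ε/(2*(B+1)) + ε/(2*(B+1)) = ε/(B+1) := by
            field_simp
            ring
          linarith
        obtain ⟨u, hu, hsepu⟩ := hsep x hxS' y hyS' hne
        have hub' : c0Norm v (translateW u x - translateW u y) ≤ B * c0Norm v (x - y) := by
          rw [translate_sub]
          exact hB _ (MemC0.sub' hpos (hKA hxK) (hKA hyK)) u hu.1
        have hBnn : B * c0Norm v (x - y) ≤ B * (ε/(B+1)) :=
          mul_le_mul_of_nonneg_left hxy'.le hB0
        have hfin : B * (ε/(B+1)) < ε := by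
          rw [mul_div_assoc']
          rw [div_lt_iff₀ (by positivity)]
          nlinarith
        have : ε ≤ c0Norm v (translateW u x - translateW u y) := hsepu
        linarith
      exact Finset.card_le_card_of_injOn pk hmaps hinj
    have hms : ∀ t : ℝ, maxSep d translateW K t ε ≤ (N : ℝ≥0∞) :=
      fun t => maxSep_le_of_card_le (hcard t)
    have hlimsup_le : Filter.limsup
        (fun t : ℝ => ((t⁻¹ : ℝ):EReal) * elog (maxSep d translateW K t ε)) Filter.atTop ≤
        Filter.limsup (fun t : ℝ => (((t⁻¹ * Real.log (N+1)) : ℝ) : EReal)) Filter.atTop := by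
      refine Filter.limsup_le_limsup ?_
      filter_upwards [Filter.eventually_ge_atTop (1:ℝ)] with t ht
      have hti : (0:ℝ) ≤ t⁻¹ := inv_nonneg.2 (by linarith)
      have h1 : elog (maxSep d translateW K t ε) ≤ ((Real.log (N+1) :ℝ):EReal) :=
        elog_le_of_le (hms t)
      have hne : maxSep d translateW K t ε ≠ ⊤ :=
        ne_top_of_le_ne_top (by simp) (hms t)
      have heq : elog (maxSep d translateW K t ε)
          = ((Real.log (maxSep d translateW K t ε).toReal : ℝ) : EReal) := by
        unfold elog
        rw [if_neg hne]
      rw [heq] at h1 ⊢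
      rw [← EReal.coe_mul]
      rw [EReal.coe_le_coe_iff] at h1 ⊢
      exact mul_le_mul_of_nonneg_left h1 hti
    have hlim0 : Filter.Tendsto (fun t : ℝ => (((t⁻¹ * Real.log (N+1)) : ℝ) : EReal))
        Filter.atTop (nhds (0:EReal)) := by
      have h0 : ((0:ℝ):EReal) = (0:EReal) := by simp
      rw [← h0]
      rw [EReal.tendsto_coe]
      have := tendsto_inv_atTop_zero.mul_const (Real.log (N+1))
      simpa using this
    exact le_trans hlimsup_le (le_of_eq hlim0.limsup_eq)
  · have h0 : (0:EReal) = entropyOn d translateW (∅ : Set (ℝ→ℝ)) :=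
      (entropyOn_empty _ _).symm
    rw [h0]
    exact le_iSup₂ (f := fun (K : Set (ℝ→ℝ))
      (_ : K ⊆ {f | MemC0 v f} ∧ DSeqCompact d K) => entropyOn d translateW K)
      ∅ ⟨Set.empty_subset _, DSeqCompact_empty d⟩

end C0Aux
namespace C0Aux

/-- A tent function of half-width `h` centered at `p`. -/
noncomputable def tentF (p h : ℝ) : ℝ → ℝ := fun z => max 0 (1 - |z - p| / h)

lemma tentF_continuous (p h : ℝ) : Continuous (tentF p h) := by
  unfold tentF
  fun_prop

lemma tentF_nonneg (p h z : ℝ) : 0 ≤ tentF p h z := le_max_left _ _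

lemma tentF_le_one {p h : ℝ} (hh : 0 < h) (z : ℝ) : tentF p h z ≤ 1 := by
  unfold tentF
  have : |z - p| / h ≥ 0 := by positivity
  rw [max_le_iff]
  constructor <;> linarith

lemma tentF_self (p : ℝ) {h : ℝ} (hh : 0 < h) : tentF p h p = 1 := by
  unfold tentF
  simp

lemma tentF_eq_zero {p h z : ℝ} (hh : 0 < h) (hz : h ≤ |z - p|) : tentF p h z = 0 := by
  unfold tentF
  rw [max_eq_left]
  have : 1 ≤ |z - p| / h := (one_le_div hh).2 hz
  linarith

lemma tentF_support {p h z : ℝ} (hh : 0 < h) (hz : tentF p h z ≠ 0) : |z - p| < h := by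
  by_contra hcon
  push_neg at hcon
  exact hz (tentF_eq_zero hh hcon)

variable {v : ℝ → ℝ} {M w : ℝ}

set_option maxHeartbeats 1000000 in
/-- The key stage construction for infinite entropy. -/
lemma stage_data (hpos : ∀ x, 0 ≤ x → 0 < v x)
    (hb : ∀ a : ℝ, ∃ C, 0 < C ∧ ∀ x, 0 ≤ x → x ≤ a → v x ≤ C)
    (hM : 1 ≤ M) (hw : 0 ≤ w)
    (hgrow : ∀ x, 0 ≤ x → ∀ t, 0 ≤ t → v x ≤ M * Real.exp (w * t) * v (x + t))
    (n : ℕ) {x y' : ℝ} (hx : 0 ≤ x) (hxy : x + ((n:ℝ)+1) ≤ y')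
    (hrat : 2^n * (M^2 * Real.exp (2*w)) * v y' < v x) :
    ∃ (S : Finset (ℝ → ℝ)) (L : ℝ) (G : ℕ),
      (n:ℝ) ≤ L ∧ (n:ℝ) * L ≤ (G:ℝ) ∧ S.card = 2^G ∧
      (↑S ⊆ {f | MemC0 v f}) ∧ (∀ f ∈ S, c0Norm v f ≤ (1/2)^n) ∧
      (∀ t : ℝ, L ≤ t → IsSepSet (fun f g => c0Norm v (f - g)) translateW t 1 ↑S) := by
  classical
  have hvx : 0 < v x := hpos x hx
  have hvy' : 0 < v y' := hpos y' (by linarith [(Nat.cast_nonneg n : (0:ℝ) ≤ (n:ℝ))])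
  set y : ℝ := y' - 1 with hy
  set L : ℝ := y - x with hL
  have hLn : (n:ℝ) ≤ L := by rw [hL, hy]; linarith
  have hL0 : 0 ≤ L := le_trans (Nat.cast_nonneg n) hLn
  set G : ℕ := ⌈(n:ℝ) * L⌉₊ + 1 with hG
  have hG0 : 0 < G := Nat.succ_pos _
  have hGnL : (n:ℝ) * L ≤ (G:ℝ) := by
    calc (n:ℝ) * L ≤ (⌈(n:ℝ)*L⌉₊ : ℝ) := Nat.le_ceil _
      _ ≤ (G:ℝ) := by rw [hG]; push_cast; linarith
  have hGR : (0:ℝ) < (G:ℝ) := by exact_mod_cast hG0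
  set h : ℝ := 1 / (2 * (G:ℝ)) with hh
  have hhpos : 0 < h := by rw [hh]; positivity
  have h2G : (2*(G:ℝ)) * h = 1 := by rw [hh]; field_simp
  set z : Fin G → ℝ := fun j => y + (2*(j:ℝ)+1) * h with hz
  have hzval : ∀ j : Fin G, z j = y + (2*(j:ℝ)+1) * h := fun j => rfl
  have hzy : ∀ j : Fin G, y + h ≤ z j ∧ z j + h ≤ y + 1 := by
    intro j
    rw [hzval j]
    constructor
    · have hj0 : (0:ℝ) ≤ (j:ℝ) := Nat.cast_nonneg _
      have := mul_nonneg hj0 hhpos.le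
      nlinarith
    · have hjG : (j:ℝ) ≤ (G:ℝ) - 1 := by
        have hj2 := j.2
        have : (j:ℝ) + 1 ≤ (G:ℝ) := by exact_mod_cast hj2
        linarith
      have hfac : (0:ℝ) ≤ (2*(G:ℝ) - (2*(j:ℝ)+2)) * h :=
        mul_nonneg (by linarith) hhpos.le
      nlinarith
  have hzsep : ∀ j k : Fin G, j ≠ k → 2*h ≤ |z j - z k| := by
    intro j k hjk
    rw [hzval j, hzval k]
    have hkey : y + (2*(j:ℝ)+1) * h - (y + (2*(k:ℝ)+1) * h) = 2*h*((j:ℝ) - (k:ℝ)) := by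
      ring
    rw [hkey, abs_mul]
    have h1 : (1:ℝ) ≤ |(j:ℝ) - (k:ℝ)| := by
      have hint : (j:ℝ) - (k:ℝ) = (((j:ℤ) - (k:ℤ) : ℤ) : ℝ) := by push_cast; ring
      rw [hint]
      have hm0 : ((j:ℤ) - (k:ℤ)) ≠ 0 := by
        intro hc
        apply hjk
        have : (j:ℤ) = (k:ℤ) := by omega
        exact Fin.ext (by exact_mod_cast this)
      have h1' : (1:ℤ) ≤ |(j:ℤ) - (k:ℤ)| := Int.one_le_abs hm0
      calc (1:ℝ) = ((1:ℤ):ℝ) := by norm_num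
        _ ≤ ((|(j:ℤ) - (k:ℤ)| : ℤ) : ℝ) := by exact_mod_cast h1'
        _ = |(((j:ℤ) - (k:ℤ) : ℤ) : ℝ)| := by push_cast; rfl
    have habs : |2*h| = 2*h := abs_of_pos (by linarith)
    calc 2*h = |2*h| * 1 := by rw [habs]; ring
      _ ≤ |2*h| * |(j:ℝ) - (k:ℝ)| := mul_le_mul_of_nonneg_left h1 (abs_nonneg _)
  have hzsep1 : ∀ j k : Fin G, j ≠ k → h ≤ |z j - z k| := by
    intro j k hjk
    have := hzsep j k hjk
    linarith
  have huniq : ∀ (z0 : ℝ) (j k : Fin G),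
      tentF (z j) h z0 ≠ 0 → tentF (z k) h z0 ≠ 0 → j = k := by
    intro z0 j k hj hk
    by_contra hjk
    have h1 := tentF_support hhpos hj
    have h2 := tentF_support hhpos hk
    have h3 := hzsep j k hjk
    have hkey : z j - z k = (z0 - z k) - (z0 - z j) := by ring
    have h4 : |z j - z k| ≤ |z0 - z k| + |z0 - z j| := by
      rw [hkey]
      exact abs_sub _ _
    linarith
  set δ : ℝ := M * Real.exp w / v x with hδ
  have hδpos : 0 < δ := by rw [hδ]; positivity
  set fc : (Fin G → Bool) → ℝ → ℝ :=
    fun c z0 => ∑ j : Fin G, (if c j then δ else 0) * tentF (z j) h z0 with hfc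
  have hfcval : ∀ (c : Fin G → Bool) (z0 : ℝ),
      fc c z0 = ∑ j : Fin G, (if c j then δ else 0) * tentF (z j) h z0 :=
    fun c z0 => rfl
  have hcollapse : ∀ (c : Fin G → Bool) (z0 : ℝ), ∃ j : Fin G,
      fc c z0 = (if c j then δ else 0) * tentF (z j) h z0 := by
    intro c z0
    by_cases hact : ∃ j : Fin G, tentF (z j) h z0 ≠ 0
    · obtain ⟨j, hj⟩ := hact
      refine ⟨j, ?_⟩
      rw [hfcval]
      refine Finset.sum_eq_single j ?_ ?_
      · intro k _ hk
        have hzk : tentF (z k) h z0 = 0 := by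
          by_contra hkne
          exact hk (huniq z0 k j hkne hj)
        rw [hzk, mul_zero]
      · intro hj'
        exact absurd (Finset.mem_univ j) hj'
    · push_neg at hact
      refine ⟨⟨0, hG0⟩, ?_⟩
      rw [hfcval]
      rw [hact ⟨0, hG0⟩, mul_zero]
      exact Finset.sum_eq_zero (fun k _ => by rw [hact k, mul_zero])
  have hval : ∀ (c : Fin G → Bool) (j : Fin G),
      fc c (z j) = if c j then δ else 0 := by
    intro c j
    rw [hfcval]
    have hsum : ∑ k : Fin G, (if c k then δ else 0) * tentF (z k) h (z j)
        = (if c j then δ else 0) * tentF (z j) h (z j) := by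
      refine Finset.sum_eq_single j ?_ ?_
      · intro k _ hk
        have hzk : tentF (z k) h (z j) = 0 :=
          tentF_eq_zero hhpos (hzsep1 j k (fun hjk => hk (hjk ▸ rfl)))
        rw [hzk, mul_zero]
      · intro hj'
        exact absurd (Finset.mem_univ j) hj'
    rw [hsum, tentF_self _ hhpos, mul_one]
  have hmem : ∀ c : Fin G → Bool, MemC0 v (fc c) := by
    intro c
    constructor
    · apply Continuous.continuousOn
      have : Continuous (fun z0 => ∑ j : Fin G, (if c j then δ else 0) * tentF (z j) h z0) := by
        refine continuous_finset_sum _ ?_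
        intro j _
        exact continuous_const.mul (tentF_continuous _ _)
      exact this
    · refine Filter.Tendsto.congr' ?_ tendsto_const_nhds
      filter_upwards [Filter.eventually_ge_atTop (y+1)] with z0 hz0
      have hz00 : fc c z0 = 0 := by
        rw [hfcval]
        refine Finset.sum_eq_zero ?_
        intro j _
        have hj2 := (hzy j).2
        have hzj0 : tentF (z j) h z0 = 0 := by
          refine tentF_eq_zero hhpos ?_
          rw [abs_of_nonneg (by linarith : (0:ℝ) ≤ z0 - z j)]
          linarith
        rw [hzj0, mul_zero]
      simp [hz00]
  have hnorm : ∀ c : Fin G → Bool, c0Norm v (fc c) ≤ (1/2)^n := by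
    intro c
    refine c0Norm_le (by positivity) ?_
    intro z0 hz0
    obtain ⟨j, hj⟩ := hcollapse c z0
    by_cases hz' : tentF (z j) h z0 = 0
    · rw [hj, hz', mul_zero]
      simp only [abs_zero, zero_mul]
      positivity
    · have hsupp := tentF_support hhpos hz'
      have hzj := hzy j
      rw [abs_lt] at hsupp
      have hz0y : y < z0 ∧ z0 < y + 1 :=
        ⟨by linarith [hzj.1, hsupp.1], by linarith [hzj.2, hsupp.2]⟩
      have hvz0 : v z0 ≤ M * Real.exp w * v y' := by
        have hd : 0 ≤ y' - z0 := by rw [hy] at hz0y; linarith [hz0y.2]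
        have hgr := hgrow z0 hz0 (y' - z0) hd
        rw [add_sub_cancel] at hgr
        have hexp : Real.exp (w * (y' - z0)) ≤ Real.exp w := by
          apply Real.exp_le_exp.2
          have : y' - z0 ≤ 1 := by rw [hy] at hz0y; linarith [hz0y.1]
          nlinarith
        calc v z0 ≤ M * Real.exp (w * (y'-z0)) * v y' := hgr
          _ ≤ M * Real.exp w * v y' := by
              have hM0 : (0:ℝ) ≤ M := le_trans zero_le_one hM
              gcongr
      have habs : |fc c z0| ≤ δ := by
        rw [hj, abs_mul]
        have h1 : |if c j then δ else 0| ≤ δ := by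
          by_cases hcj : c j <;> simp [hcj, abs_of_pos hδpos, hδpos.le]
        have h2 : |tentF (z j) h z0| ≤ 1 := by
          rw [abs_of_nonneg (tentF_nonneg _ _ _)]
          exact tentF_le_one hhpos _
        calc |if c j then δ else 0| * |tentF (z j) h z0| ≤ δ * 1 :=
              mul_le_mul h1 h2 (abs_nonneg _) hδpos.le
          _ = δ := mul_one δ
      have hvz0' : 0 ≤ v z0 := (hpos z0 hz0).le
      have hhalf : (0:ℝ) < (1/2:ℝ)^n := by positivity
      have hpow : ((1:ℝ)/2)^n * (2:ℝ)^n = 1 := by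
        rw [← mul_pow]; norm_num
      have hA : 2^n * ((M^2*Real.exp (2*w)) * v y') < v x := by
        calc 2^n * ((M^2*Real.exp (2*w)) * v y')
            = 2 ^ n * (M ^ 2 * Real.exp (2 * w)) * v y' := by ring
          _ < v x := hrat
      calc |fc c z0| * v z0 ≤ δ * (M * Real.exp w * v y') :=
            mul_le_mul habs hvz0 hvz0' hδpos.le
        _ = (M^2 * Real.exp (2*w)) * v y' / v x := by
            rw [hδ]
            have he : Real.exp (2*w) = Real.exp w * Real.exp w := by
              rw [two_mul, Real.exp_add]
            rw [he]
            field_simp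
        _ ≤ (1/2)^n := by
            rw [div_le_iff₀ hvx]
            calc (M^2 * Real.exp (2*w)) * v y'
                = (1/2:ℝ)^n * (2^n * ((M^2*Real.exp (2*w)) * v y')) := by
                  rw [← mul_assoc, hpow, one_mul]
              _ ≤ (1/2:ℝ)^n * v x := mul_le_mul_of_nonneg_left hA.le hhalf.le
  have hinj : Function.Injective fc := by
    intro c c' hcc
    funext j
    have hv1 := hval c j
    rw [hcc] at hv1
    rw [hval c' j] at hv1
    by_cases hcj : c j <;> by_cases hcj' : c' j <;>
      simp [hcj, hcj'] at hv1 ⊢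
    · exact absurd hv1 (ne_of_lt hδpos)
    · exact absurd hv1 (ne_of_gt hδpos)
  set S : Finset (ℝ → ℝ) := Finset.image fc Finset.univ with hS
  have hcard : S.card = 2^G := by
    rw [hS, Finset.card_image_of_injective _ hinj, Finset.card_univ]
    rw [Fintype.card_fun]
    simp
  refine ⟨S, L, G, hLn, hGnL, hcard, ?_, ?_, ?_⟩
  · intro f hf
    simp only [hS, Finset.coe_image, Set.mem_image] at hf
    obtain ⟨c, _, rfl⟩ := hf
    exact hmem c
  · intro f hf
    simp only [hS, Finset.mem_image] at hf
    obtain ⟨c, _, rfl⟩ := hf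
    exact hnorm c
  · intro t ht
    intro f hfS g hgS hfg
    refine ⟨L, ⟨hL0, ht⟩, ?_⟩
    simp only [hS, Finset.coe_image, Set.mem_image] at hfS hgS
    obtain ⟨c, _, rfl⟩ := hfS
    obtain ⟨c', _, rfl⟩ := hgS
    have hcc : c ≠ c' := fun he => hfg (by rw [he])
    obtain ⟨j, hj⟩ := Function.ne_iff.1 hcc
    show (1:ℝ) ≤ c0Norm v (translateW L (fc c) - translateW L (fc c'))
    set x' : ℝ := z j - L with hx'
    have hx'x : x' - x = z j - y := by rw [hx', hL]; ring
    have hzj := hzy j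
    have hx'pos : x < x' := by
      have hyzj : y < z j := by linarith [hzj.1, hhpos]
      linarith [hx'x, hyzj]
    have hx'0 : 0 ≤ x' := le_trans hx hx'pos.le
    have hx'1 : x' - x ≤ 1 := by
      rw [hx'x]
      linarith [hzj.2, hhpos]
    have hvx' : v x / (M * Real.exp w) ≤ v x' := by
      have hgr := hgrow x hx (x' - x) (by linarith)
      rw [add_sub_cancel] at hgr
      have hexp : Real.exp (w * (x' - x)) ≤ Real.exp w := by
        apply Real.exp_le_exp.2
        nlinarith
      have hvx'0 : 0 < v x' := hpos x' hx'0
      rw [div_le_iff₀ (by positivity)]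
      calc v x ≤ M * Real.exp (w * (x'-x)) * v x' := hgr
        _ ≤ M * Real.exp w * v x' := by
            have hM0 : (0:ℝ) ≤ M := le_trans zero_le_one hM
            gcongr
        _ = v x' * (M * Real.exp w) := by ring
    have hmemdiff : MemC0 v (fc c - fc c') := MemC0.sub' hpos (hmem c) (hmem c')
    have hmemtr : MemC0 v (translateW L (fc c - fc c')) :=
      MemC0.translate' hpos hM hw hgrow hmemdiff hL0
    have hbdd : BddAbove (NSet v (translateW L (fc c - fc c'))) :=
      bddAbove_nset hpos hb hmemtr
    have hle := le_c0Norm (v := v) hbdd hx'0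
    have heval : translateW L (fc c - fc c') x' = fc c (z j) - fc c' (z j) := by
      show (fc c - fc c') (x' + L) = _
      have hid : x' + L = z j := by rw [hx']; ring
      rw [hid]
      rfl
    have hdiff : |fc c (z j) - fc c' (z j)| = δ := by
      rw [hval c j, hval c' j]
      by_cases hcj : c j <;> by_cases hcj' : c' j
      · exact absurd (by rw [hcj, hcj'] : c j = c' j) hj
      · rw [if_pos hcj, if_neg hcj', sub_zero]
        exact abs_of_pos hδpos
      · rw [if_neg hcj, if_pos hcj', zero_sub, abs_neg]
        exact abs_of_pos hδpos
      · exact absurd (by simp [hcj, hcj'] : c j = c' j) hj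
    have hfinal : 1 ≤ |fc c (z j) - fc c' (z j)| * v x' := by
      rw [hdiff]
      have hδ1 : δ * (v x / (M * Real.exp w)) = 1 := by
        rw [hδ]
        field_simp
      calc (1:ℝ) = δ * (v x / (M * Real.exp w)) := hδ1.symm
        _ ≤ δ * v x' := mul_le_mul_of_nonneg_left hvx' hδpos.le
    calc (1:ℝ) ≤ |fc c (z j) - fc c' (z j)| * v x' := hfinal
      _ = |translateW L (fc c - fc c') x'| * v x' := by rw [heval]
      _ ≤ c0Norm v (translateW L (fc c - fc c')) := hle
      _ = c0Norm v (translateW L (fc c) - translateW L (fc c')) := by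
          rw [translate_sub]

end C0Aux
namespace C0Aux

variable {v : ℝ → ℝ} {M w : ℝ}

lemma c0Norm_zero (hpos : ∀ x, 0 ≤ x → 0 < v x) : c0Norm v (0 : ℝ → ℝ) = 0 := by
  refine le_antisymm (c0Norm_le le_rfl ?_) (c0Norm_nonneg hpos _)
  intro x _
  simp

lemma ereal_eq_top_of_forall_le {x : EReal} (h : ∀ C : ℝ, (C:EReal) ≤ x) : x = ⊤ := by
  induction x using EReal.rec with
  | bot =>
    have := h 0
    simp at this
  | coe r =>
    have := h (r+1)
    rw [EReal.coe_le_coe_iff] at this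
    linarith
  | top => rfl

set_option maxHeartbeats 1000000 in
lemma entropyFam_top_of_one (hpos : ∀ x, 0 ≤ x → 0 < v x)
    (hb : ∀ a : ℝ, ∃ C, 0 < C ∧ ∀ x, 0 ≤ x → x ≤ a → v x ≤ C)
    (hM : 1 ≤ M) (hw : 0 ≤ w)
    (hgrow : ∀ x, 0 ≤ x → ∀ t, 0 ≤ t → v x ≤ M * Real.exp (w * t) * v (x + t))
    (h1 : ∀ B : ℝ, ∃ r ∈ ratioSet v, B < r) :
    entropyFam (fun f g => c0Norm v (f - g)) translateW {f | MemC0 v f} = ⊤ := by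
  classical
  set d : (ℝ→ℝ) → (ℝ→ℝ) → ℝ := fun f g => c0Norm v (f - g) with hd
  -- stage data for every n
  have hstage : ∀ n : ℕ, ∃ (S : Finset (ℝ → ℝ)) (L : ℝ) (G : ℕ),
      (n:ℝ) ≤ L ∧ (n:ℝ) * L ≤ (G:ℝ) ∧ S.card = 2^G ∧
      (↑S ⊆ {f | MemC0 v f}) ∧ (∀ f ∈ S, c0Norm v f ≤ (1/2)^n) ∧
      (∀ t : ℝ, L ≤ t → IsSepSet d translateW t 1 ↑S) := by
    intro n
    set B : ℝ := 2^n * (M^2 * Real.exp (2*w)) + M * Real.exp (w * ((n:ℝ)+1)) with hB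
    obtain ⟨r, hrmem, hBr⟩ := h1 B
    obtain ⟨x, y', hx, hxy', rfl⟩ := hrmem
    have hvy' : 0 < v y' := hpos y' (le_trans hx hxy')
    have hBvy : B * v y' < v x := by
      rw [← lt_div_iff₀ hvy']
      calc B = B := rfl
        _ < v x / v y' := hBr
    have hterm1 : (0:ℝ) < 2^n * (M^2 * Real.exp (2*w)) := by positivity
    have hterm2 : (0:ℝ) < M * Real.exp (w * ((n:ℝ)+1)) := by positivity
    have hxy : x + ((n:ℝ)+1) ≤ y' := by
      by_contra hcon
      push_neg at hcon
      have hd0 : 0 ≤ y' - x := by linarith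
      have := hgrow x hx (y' - x) hd0
      rw [add_sub_cancel] at this
      have hexp : Real.exp (w * (y' - x)) ≤ Real.exp (w * ((n:ℝ)+1)) := by
        apply Real.exp_le_exp.2
        have : y' - x ≤ (n:ℝ)+1 := by linarith
        nlinarith
      have h2 : v x ≤ M * Real.exp (w * ((n:ℝ)+1)) * v y' := by
        calc v x ≤ M * Real.exp (w * (y'-x)) * v y' := this
          _ ≤ M * Real.exp (w * ((n:ℝ)+1)) * v y' := by
              have hM0 : (0:ℝ) ≤ M := le_trans zero_le_one hM
              gcongr
      nlinarith [mul_pos hterm1 hvy']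
    have hrat : 2^n * (M^2 * Real.exp (2*w)) * v y' < v x := by
      nlinarith [mul_pos hterm2 hvy']
    exact stage_data hpos hb hM hw hgrow n hx hxy hrat
  choose S L G hLn hGnL hcard hsub hnorm hsep using hstage
  -- the compact set
  set K : Set (ℝ → ℝ) := insert (0:ℝ→ℝ) (⋃ n, (↑(S n) : Set (ℝ→ℝ))) with hK
  have hKA : K ⊆ {f | MemC0 v f} := by
    intro f hf
    rcases hf with hf | hf
    · rw [hf]; exact memC0_zero
    · obtain ⟨s, ⟨n, rfl⟩, hfs⟩ := hf
      exact hsub n hfs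
  have hKnorm : ∀ f ∈ K, f ≠ 0 → ∃ n, f ∈ S n := by
    intro f hf hf0
    rcases hf with hf | hf
    · exact absurd hf hf0
    · obtain ⟨s, ⟨n, rfl⟩, hfs⟩ := hf
      exact ⟨n, hfs⟩
  -- sequential compactness
  have hKc : DSeqCompact d K := by
    intro u hu
    by_cases hrep : ∃ f, f ∈ K ∧ ∃ᶠ k in Filter.atTop, u k = f
    · obtain ⟨f, hfK, hfreq⟩ := hrep
      obtain ⟨φ, hφ, hφf⟩ := Filter.extraction_of_frequently_atTop hfreq
      refine ⟨f, hfK, φ, hφ, ?_⟩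
      have : ∀ k, d (u (φ k)) f = 0 := by
        intro k
        rw [hd]
        simp only []
        rw [hφf k]
        rw [sub_self]
        exact c0Norm_zero hpos
      simpa [this] using tendsto_const_nhds
    · push_neg at hrep
      refine ⟨0, Set.mem_insert _ _, id, strictMono_id, ?_⟩
      rw [Metric.tendsto_atTop]
      intro ε hε
      obtain ⟨N, hN⟩ := exists_pow_lt_of_lt_one hε (by norm_num : (1:ℝ)/2 < 1)
      -- eventually avoid all elements of stages < N
      set E : Finset (ℝ → ℝ) := (Finset.range N).biUnion S with hE
      have hav : ∀ᶠ k in Filter.atTop, ∀ f ∈ E, u k ≠ f := by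
        rw [Filter.eventually_all_finset]
        intro f hf
        rcases Classical.em (f ∈ K) with hfK | hfK
        · have := hrep f hfK
          exact this
        · refine Filter.Eventually.of_forall (fun k => ?_)
          intro he
          exact hfK (he ▸ hu k)
      rw [Filter.eventually_atTop] at hav
      obtain ⟨N0, hN0⟩ := hav
      refine ⟨N0, fun k hk => ?_⟩
      have hne := hN0 k hk
      have hdist : d (u k) 0 ≤ (1/2:ℝ)^N := by
        rw [hd]
        simp only []
        rw [sub_zero]
        rcases Classical.em (u k = 0) with h0 | h0
        · rw [h0, c0Norm_zero hpos]
          positivity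
        · obtain ⟨m, hm⟩ := hKnorm (u k) (hu k) h0
          have hmN : N ≤ m := by
            by_contra hcon
            push_neg at hcon
            exact hne (u k) (Finset.mem_biUnion.2 ⟨m, Finset.mem_range.2 hcon, hm⟩) rfl
          calc c0Norm v (u k) ≤ (1/2:ℝ)^m := hnorm m _ hm
            _ ≤ (1/2:ℝ)^N := by
                apply pow_le_pow_of_le_one (by norm_num) (by norm_num) hmN
      have hdnn : 0 ≤ d (u k) 0 := c0Norm_nonneg hpos _
      simp only [id_eq]
      rw [Real.dist_eq, sub_zero, abs_of_nonneg hdnn]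
      linarith
  -- the entropy on K is infinite
  have hLpos : ∀ n : ℕ, 1 ≤ n → (0:ℝ) < L n := by
    intro n hn
    have := hLn n
    have : (1:ℝ) ≤ (n:ℝ) := by exact_mod_cast hn
    linarith [hLn n]
  have hfreq : ∀ C : ℝ, (C : EReal) ≤ Filter.limsup
      (fun t : ℝ => ((t⁻¹ : ℝ) : EReal) * elog (maxSep d translateW K t 1))
      Filter.atTop := by
    intro C
    refine Filter.le_limsup_of_frequently_le ?_
    rw [Filter.frequently_atTop]
    intro a
    set n : ℕ := max (max ⌈a⌉₊ (⌈C / Real.log 2⌉₊ + 1)) 1 with hn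
    have hn1 : 1 ≤ n := le_max_right _ _
    have hna : (a:ℝ) ≤ (n:ℝ) := by
      calc a ≤ (⌈a⌉₊ : ℝ) := Nat.le_ceil a
        _ ≤ (n:ℝ) := by
            have : ⌈a⌉₊ ≤ n := le_trans (le_max_left _ _) (le_max_left _ _)
            exact_mod_cast this
    have hnC : C ≤ (n:ℝ) * Real.log 2 := by
      have hlog2 : (0:ℝ) < Real.log 2 := Real.log_pos (by norm_num)
      have h1 : C / Real.log 2 ≤ (⌈C / Real.log 2⌉₊ : ℝ) := Nat.le_ceil _
      have h2 : (⌈C / Real.log 2⌉₊ : ℝ) ≤ (n:ℝ) := by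
        have : ⌈C / Real.log 2⌉₊ ≤ n :=
          le_trans (le_trans (Nat.le_succ _) (le_max_right _ _)) (le_max_left _ _)
        exact_mod_cast this
      calc C = (C / Real.log 2) * Real.log 2 := by field_simp
        _ ≤ (n:ℝ) * Real.log 2 :=
            mul_le_mul_of_nonneg_right (le_trans h1 h2) hlog2.le
    refine ⟨L n, le_trans hna (hLn n), ?_⟩
    have hLn0 : (0:ℝ) < L n := hLpos n hn1
    -- lower bound for maxSep
    have hms : ((2:ℝ≥0∞))^(G n) ≤ maxSep d translateW K (L n) 1 := by
      have hmem : (↑(S n) : Set (ℝ→ℝ)) ⊆ K ∧ IsSepSet d translateW (L n) 1 ↑(S n) := by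
        constructor
        · intro f hf
          exact Set.mem_insert_iff.2 (Or.inr (Set.mem_iUnion.2 ⟨n, hf⟩))
        · exact hsep n (L n) le_rfl
      calc ((2:ℝ≥0∞))^(G n) = ((S n).card : ℝ≥0∞) := by
            rw [hcard n]; push_cast; rfl
        _ ≤ maxSep d translateW K (L n) 1 := by
            refine le_trans (le_of_eq rfl) ?_
            exact le_iSup_of_le (S n) (le_iSup_of_le hmem le_rfl)
    -- conclude
    by_cases htop : maxSep d translateW K (L n) 1 = ⊤
    · rw [htop]
      have helog : elog (⊤ : ℝ≥0∞) = ⊤ := by unfold elog; rw [if_pos rfl]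
      rw [helog]
      have hinv : (0:ℝ) < (L n)⁻¹ := by positivity
      have : (((L n)⁻¹ : ℝ) : EReal) * ⊤ = ⊤ := by
        apply EReal.mul_top_of_pos
        exact_mod_cast hinv
      rw [this]
      exact le_top
    · have helog : elog (maxSep d translateW K (L n) 1)
          = ((Real.log (maxSep d translateW K (L n) 1).toReal : ℝ) : EReal) := by
        unfold elog; rw [if_neg htop]
      rw [helog]
      rw [← EReal.coe_mul, EReal.coe_le_coe_iff]
      have htr : (2:ℝ)^(G n) ≤ (maxSep d translateW K (L n) 1).toReal := by
        have := ENNReal.toReal_mono htop hms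
        calc (2:ℝ)^(G n) = ((2:ℝ≥0∞)^(G n)).toReal := by simp
          _ ≤ _ := this
      have hlog : (G n : ℝ) * Real.log 2 ≤ Real.log (maxSep d translateW K (L n) 1).toReal := by
        have h2 : Real.log ((2:ℝ)^(G n)) ≤ Real.log (maxSep d translateW K (L n) 1).toReal :=
          Real.log_le_log (by positivity) htr
        rw [Real.log_pow] at h2
        exact h2
      have hlog2 : (0:ℝ) < Real.log 2 := Real.log_pos (by norm_num)
      have hGn : (n:ℝ) * L n ≤ (G n : ℝ) := hGnL n
      have hchain : (n:ℝ) * Real.log 2 ≤ (L n)⁻¹ * Real.log (maxSep d translateW K (L n) 1).toReal := by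
        have h3 : (n:ℝ) * L n * Real.log 2 ≤ (G n : ℝ) * Real.log 2 :=
          mul_le_mul_of_nonneg_right hGn hlog2.le
        have h4 : (n:ℝ) * L n * Real.log 2 ≤ Real.log (maxSep d translateW K (L n) 1).toReal :=
          le_trans h3 hlog
        have h5 := mul_le_mul_of_nonneg_left h4 (by positivity : (0:ℝ) ≤ (L n)⁻¹)
        calc (n:ℝ) * Real.log 2 = (L n)⁻¹ * ((n:ℝ) * L n * Real.log 2) := by
              field_simp
          _ ≤ (L n)⁻¹ * Real.log (maxSep d translateW K (L n) 1).toReal := h5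
      linarith [hnC, hchain]
  -- wrap up
  have hOn : entropyOn d translateW K = ⊤ := by
    have hlim : Filter.limsup
        (fun t : ℝ => ((t⁻¹ : ℝ) : EReal) * elog (maxSep d translateW K t 1))
        Filter.atTop = ⊤ := ereal_eq_top_of_forall_le hfreq
    rw [eq_top_iff]
    rw [← hlim]
    exact le_iSup_of_le (1:ℝ) (le_iSup_of_le one_pos le_rfl)
  rw [eq_top_iff, ← hOn]
  exact le_iSup_of_le K (le_iSup_of_le ⟨hKA, hKc⟩ le_rfl)

end C0Aux
namespace C0Aux

variable {v : ℝ → ℝ} {M w : ℝ}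

set_option maxHeartbeats 1000000 in
lemma exists_nonvanishing_orbit (hpos : ∀ x, 0 ≤ x → 0 < v x)
    (hb : ∀ a : ℝ, ∃ C, 0 < C ∧ ∀ x, 0 ≤ x → x ≤ a → v x ≤ C)
    (hM : 1 ≤ M) (hw : 0 ≤ w)
    (hgrow : ∀ x, 0 ≤ x → ∀ t, 0 ≤ t → v x ≤ M * Real.exp (w * t) * v (x + t))
    (h1 : ∀ B : ℝ, ∃ r ∈ ratioSet v, B < r) :
    ∃ f, MemC0 v f ∧
      ¬ Filter.Tendsto (fun t => c0Norm v (translateW t f)) Filter.atTop (nhds 0) := by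
  classical
  have hv0 : 0 < v 0 := hpos 0 le_rfl
  -- ratio bound on bounded sets
  have hCA : ∀ A : ℝ, ∃ CA : ℝ, 0 < CA ∧ ∀ x y0, 0 ≤ x → x ≤ y0 → y0 ≤ A →
      v x ≤ CA * v y0 := by
    intro A
    obtain ⟨C, hC0, hC⟩ := hb A
    set A' : ℝ := max A 0 with hA'
    refine ⟨C * (M * Real.exp (w * A')) / v 0, by positivity, ?_⟩
    intro x y0 hx hxy hyA
    have hy0 : 0 ≤ y0 := le_trans hx hxy
    have hvy0 : v 0 / (M * Real.exp (w * A')) ≤ v y0 :=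
      vlow hpos hM hw hgrow hy0 (le_trans hyA (le_max_left _ _))
    have hvx : v x ≤ C := hC x hx (le_trans hxy hyA)
    have hden : (0:ℝ) < M * Real.exp (w * A') := by positivity
    calc v x ≤ C := hvx
      _ = (C * (M * Real.exp (w * A')) / v 0) * (v 0 / (M * Real.exp (w * A'))) := by
          field_simp
      _ ≤ (C * (M * Real.exp (w * A')) / v 0) * v y0 :=
          mul_le_mul_of_nonneg_left hvy0 (by positivity)
  -- one step of the recursion
  have hstep : ∀ (n : ℕ) (A : ℝ), ∃ q : ℝ × ℝ, 0 ≤ q.1 ∧ q.1 + ((n:ℝ)+1) ≤ q.2 ∧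
      A + 3 ≤ q.2 ∧ 2^n * (M^2 * Real.exp (2*w)) * v q.2 < v q.1 := by
    intro n A
    obtain ⟨CA, hCA0, hCAle⟩ := hCA (A + 3)
    set B : ℝ := 2^n * (M^2 * Real.exp (2*w)) + M * Real.exp (w * ((n:ℝ)+1)) + CA with hB
    obtain ⟨r, hrmem, hBr⟩ := h1 B
    obtain ⟨x, y', hx, hxy', rfl⟩ := hrmem
    have hvy' : 0 < v y' := hpos y' (le_trans hx hxy')
    have hBvy : B * v y' < v x := by
      rw [← lt_div_iff₀ hvy']
      exact hBr
    have hterm1 : (0:ℝ) < 2^n * (M^2 * Real.exp (2*w)) := by positivity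
    have hterm2 : (0:ℝ) < M * Real.exp (w * ((n:ℝ)+1)) := by positivity
    have hxy : x + ((n:ℝ)+1) ≤ y' := by
      by_contra hcon
      push_neg at hcon
      have hd0 : 0 ≤ y' - x := by linarith
      have hgr := hgrow x hx (y' - x) hd0
      rw [add_sub_cancel] at hgr
      have hexp : Real.exp (w * (y' - x)) ≤ Real.exp (w * ((n:ℝ)+1)) := by
        apply Real.exp_le_exp.2
        have : y' - x ≤ (n:ℝ)+1 := by linarith
        nlinarith
      have h2 : v x ≤ M * Real.exp (w * ((n:ℝ)+1)) * v y' := by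
        calc v x ≤ M * Real.exp (w * (y'-x)) * v y' := hgr
          _ ≤ M * Real.exp (w * ((n:ℝ)+1)) * v y' := by
              have hM0 : (0:ℝ) ≤ M := le_trans zero_le_one hM
              gcongr
      nlinarith [mul_pos hterm1 hvy', mul_pos hCA0 hvy']
    have hA3 : A + 3 ≤ y' := by
      by_contra hcon
      push_neg at hcon
      have h2 : v x ≤ CA * v y' := hCAle x y' hx hxy' hcon.le
      nlinarith [mul_pos hterm1 hvy', mul_pos hterm2 hvy']
    have hrat : 2^n * (M^2 * Real.exp (2*w)) * v y' < v x := by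
      nlinarith [mul_pos hterm2 hvy', mul_pos hCA0 hvy']
    exact ⟨(x, y'), hx, hxy, hA3, hrat⟩
  choose pick hpick1 hpick2 hpick3 hpick4 using hstep
  -- the recursive sequence of pairs
  set P : ℕ → ℝ × ℝ := fun n => Nat.rec (pick 0 0) (fun m ih => pick (m+1) ih.2) n with hP
  set X : ℕ → ℝ := fun n => (P n).1 with hX
  set Y : ℕ → ℝ := fun n => (P n).2 with hY
  have hP0 : P 0 = pick 0 0 := rfl
  have hPs : ∀ n, P (n+1) = pick (n+1) (P n).2 := fun n => rfl
  have hx : ∀ n, 0 ≤ X n := by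
    intro n
    cases n with
    | zero => exact hpick1 0 0
    | succ m => exact hpick1 (m+1) (P m).2
  have hxy : ∀ n, X n + ((n:ℝ)+1) ≤ Y n := by
    intro n
    cases n with
    | zero => exact hpick2 0 0
    | succ m => exact hpick2 (m+1) (P m).2
  have hrat : ∀ n, 2^n * (M^2 * Real.exp (2*w)) * v (Y n) < v (X n) := by
    intro n
    cases n with
    | zero => exact hpick4 0 0
    | succ m => exact hpick4 (m+1) (P m).2
  have hY0 : (3:ℝ) ≤ Y 0 := by
    have := hpick3 0 0
    rw [zero_add] at this; exact this
  have hYstep : ∀ n, Y n + 3 ≤ Y (n+1) := by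
    intro n
    exact hpick3 (n+1) (P n).2
  have hYmono : ∀ m n : ℕ, m < n → Y m + 3 ≤ Y n := by
    intro m n hmn
    induction n with
    | zero => omega
    | succ k ih =>
      rcases Nat.lt_succ_iff_lt_or_eq.1 hmn with h | h
      · have h2 := hYstep k
        have h3 := ih h
        linarith
      · rw [← h] at *
        exact hYstep m
  have hYmono' : ∀ m n : ℕ, m ≤ n → Y m ≤ Y n := by
    intro m n hmn
    rcases eq_or_lt_of_le hmn with h | h
    · rw [h]
    · linarith [hYmono m n h]
  have hY3 : ∀ n, (3:ℝ) ≤ Y n := by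
    intro n
    cases n with
    | zero => exact hY0
    | succ m => linarith [hYmono 0 (m+1) (Nat.succ_pos m), hY0]
  -- positivity of the weights at relevant points
  have hvX : ∀ n, 0 < v (X n) := fun n => hpos (X n) (hx n)
  have hvY : ∀ n, 0 < v (Y n) := by
    intro n
    apply hpos
    have := hxy n
    have := hx n
    have hn0 : (0:ℝ) ≤ (n:ℝ) := Nat.cast_nonneg n
    linarith
  -- the bumps
  set p : ℕ → ℝ := fun n => Y n - 1/2 with hp
  set δ : ℕ → ℝ := fun n => M * Real.exp w / v (X n) with hδ
  have hδpos : ∀ n, 0 < δ n := by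
    intro n
    have := hvX n
    rw [hδ]
    positivity
  set tent : ℕ → ℝ → ℝ := fun n z => δ n * tentF (p n) (1/4) z with htent
  have hquarter : (0:ℝ) < 1/4 := by norm_num
  have hactive : ∀ (n : ℕ) (z : ℝ), tent n z ≠ 0 → |z - p n| < 1/4 := by
    intro n z hz
    apply tentF_support hquarter
    intro hcon
    apply hz
    show δ n * tentF (p n) (1/4) z = 0
    rw [hcon, mul_zero]
  -- supports are far apart
  have hfar : ∀ (m n : ℕ) (z z' : ℝ), |z - z'| < 2 →
      tent m z ≠ 0 → tent n z' ≠ 0 → m = n := by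
    intro m n z z' hzz hm hn
    have h1 := hactive m z hm
    have h2 := hactive n z' hn
    rcases lt_trichotomy m n with h | h | h
    · exfalso
      have h3 := hYmono m n h
      rw [abs_lt] at h1 h2 hzz
      rw [hp] at h1 h2
      simp only at h1 h2
      have hz1 : z < Y m - 1/4 := by linarith [h1.2]
      have hz2 : Y n - 3/4 < z' := by linarith [h2.1]
      linarith [hzz.1, hzz.2]
    · exact h
    · exfalso
      have h3 := hYmono n m h
      rw [abs_lt] at h1 h2 hzz
      rw [hp] at h1 h2
      simp only at h1 h2
      have hz1 : z' < Y n - 1/4 := by linarith [h2.2]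
      have hz2 : Y m - 3/4 < z := by linarith [h1.1]
      linarith [hzz.1, hzz.2]
  -- the function
  set f : ℝ → ℝ := fun z => ∑' n, tent n z with hf
  -- local representation of f
  have hlocal : ∀ z0 : ℝ, ∃ n : ℕ, ∀ z : ℝ, |z - z0| < 1/2 → f z = tent n z := by
    intro z0
    by_cases hex : ∃ (n : ℕ) (z : ℝ), |z - z0| < 1/2 ∧ tent n z ≠ 0
    · obtain ⟨n, zw, hzw, hzwne⟩ := hex
      refine ⟨n, fun z hz => ?_⟩
      show (∑' m, tent m z) = tent n z
      refine tsum_eq_single n ?_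
      intro m hm
      by_contra hcon
      apply hm
      refine hfar m n z zw ?_ hcon hzwne
      have : |z - zw| ≤ |z - z0| + |zw - z0| := by
        have hkey : z - zw = (z - z0) - (zw - z0) := by ring
        rw [hkey]
        exact abs_sub _ _
      linarith
    · push_neg at hex
      refine ⟨0, fun z hz => ?_⟩
      have hzero : ∀ m : ℕ, tent m z = 0 := fun m => hex m z hz
      show (∑' m, tent m z) = tent 0 z
      exact tsum_eq_single 0 (fun m _ => hzero m)
  have hcont : Continuous f := by
    rw [continuous_iff_continuousAt]
    intro z0
    obtain ⟨n, hn⟩ := hlocal z0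
    have hev : f =ᶠ[nhds z0] tent n := by
      have hball : Metric.ball z0 (1/2) ∈ nhds z0 := Metric.ball_mem_nhds _ (by norm_num)
      filter_upwards [hball] with z hz
      rw [Metric.mem_ball, Real.dist_eq] at hz
      exact hn z hz
    have htc : ContinuousAt (tent n) z0 := by
      rw [htent]
      exact (continuous_const.mul (tentF_continuous _ _)).continuousAt
    exact htc.congr hev.symm
  -- pointwise norm bound on each bump, at points of its support
  have hbound : ∀ (n : ℕ) (z : ℝ), 0 ≤ z → |tent n z| * v z ≤ (1/2)^n := by
    intro n z hz
    by_cases hzn : tent n z = 0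
    · rw [hzn]
      simp only [abs_zero, zero_mul]
      positivity
    · have hsupp := hactive n z hzn
      rw [abs_lt] at hsupp
      rw [hp] at hsupp
      simp only at hsupp
      have hzY : Y n - 1 < z ∧ z < Y n := by
        constructor <;> linarith [hsupp.1, hsupp.2]
      have hvz : v z ≤ M * Real.exp w * v (Y n) := by
        have hd : 0 ≤ Y n - z := by linarith [hzY.2]
        have hgr := hgrow z hz (Y n - z) hd
        rw [add_sub_cancel] at hgr
        have hexp : Real.exp (w * (Y n - z)) ≤ Real.exp w := by
          apply Real.exp_le_exp.2
          have : Y n - z ≤ 1 := by linarith [hzY.1]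
          nlinarith
        calc v z ≤ M * Real.exp (w * (Y n - z)) * v (Y n) := hgr
          _ ≤ M * Real.exp w * v (Y n) := by
              have hM0 : (0:ℝ) ≤ M := le_trans zero_le_one hM
              have h6 : Real.exp (w * (Y n - z)) * v (Y n) ≤ Real.exp w * v (Y n) :=
                mul_le_mul_of_nonneg_right hexp (hvY n).le
              have h7 := mul_le_mul_of_nonneg_left h6 hM0
              calc M * Real.exp (w * (Y n - z)) * v (Y n)
                  = M * (Real.exp (w * (Y n - z)) * v (Y n)) := by ring
                _ ≤ M * (Real.exp w * v (Y n)) := h7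
                _ = M * Real.exp w * v (Y n) := by ring
      have habs : |tent n z| ≤ δ n := by
        rw [htent]
        simp only [abs_mul]
        have h1 : |δ n| = δ n := abs_of_pos (hδpos n)
        have h2 : |tentF (p n) (1/4) z| ≤ 1 := by
          rw [abs_of_nonneg (tentF_nonneg _ _ _)]
          exact tentF_le_one hquarter _
        calc |δ n| * |tentF (p n) (1/4) z| ≤ |δ n| * 1 :=
              mul_le_mul_of_nonneg_left h2 (abs_nonneg _)
          _ = δ n := by rw [h1, mul_one]
      have hhalf : (0:ℝ) < (1/2:ℝ)^n := by positivity
      have hpow : ((1:ℝ)/2)^n * (2:ℝ)^n = 1 := by rw [← mul_pow]; norm_num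
      have hA : 2^n * ((M^2*Real.exp (2*w)) * v (Y n)) < v (X n) := by
        calc 2^n * ((M^2*Real.exp (2*w)) * v (Y n))
            = 2 ^ n * (M ^ 2 * Real.exp (2 * w)) * v (Y n) := by ring
          _ < v (X n) := hrat n
      calc |tent n z| * v z ≤ δ n * (M * Real.exp w * v (Y n)) :=
            mul_le_mul habs hvz (hpos z hz).le (hδpos n).le
        _ = (M^2 * Real.exp (2*w)) * v (Y n) / v (X n) := by
            rw [hδ]
            have he : Real.exp (2*w) = Real.exp w * Real.exp w := by
              rw [two_mul, Real.exp_add]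
            rw [he]
            field_simp
        _ ≤ (1/2)^n := by
            rw [div_le_iff₀ (hvX n)]
            calc (M^2 * Real.exp (2*w)) * v (Y n)
                = (1/2:ℝ)^n * (2^n * ((M^2*Real.exp (2*w)) * v (Y n))) := by
                  rw [← mul_assoc, hpow, one_mul]
              _ ≤ (1/2:ℝ)^n * v (X n) := mul_le_mul_of_nonneg_left hA.le hhalf.le
  -- membership
  have hmemf : MemC0 v f := by
    constructor
    · exact hcont.continuousOn
    · rw [Metric.tendsto_atTop]
      intro ε hε
      obtain ⟨N, hN⟩ := exists_pow_lt_of_lt_one hε (by norm_num : (1:ℝ)/2 < 1)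
      refine ⟨Y N, fun z hz => ?_⟩
      have hz0 : (0:ℝ) ≤ z := le_trans (by linarith [hY3 N]) hz
      obtain ⟨n, hn⟩ := hlocal z
      have hfz : f z = tent n z := hn z (by rw [sub_self, abs_zero]; norm_num)
      have hsmall : |f z| * v z ≤ (1/2:ℝ)^N := by
        rw [hfz]
        by_cases hzn : tent n z = 0
        · rw [hzn]; simp only [abs_zero, zero_mul]; positivity
        · have hsupp := hactive n z hzn
          rw [abs_lt] at hsupp
          rw [hp] at hsupp
          simp only at hsupp
          have hzYn : z < Y n := by linarith [hsupp.2]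
          have hNn : N ≤ n := by
            by_contra hcon
            push_neg at hcon
            have := hYmono' n N hcon.le
            linarith
          calc |tent n z| * v z ≤ (1/2:ℝ)^n := hbound n z hz0
            _ ≤ (1/2:ℝ)^N := pow_le_pow_of_le_one (by norm_num) (by norm_num) hNn
      have hnn : 0 ≤ |f z| * v z := mul_nonneg (abs_nonneg _) (hpos z hz0).le
      rw [Real.dist_eq, sub_zero, abs_of_nonneg hnn]
      linarith
  refine ⟨f, hmemf, ?_⟩
  -- the orbit does not converge to zero
  intro hten
  rw [Metric.tendsto_atTop] at hten
  obtain ⟨T, hT⟩ := hten 1 one_pos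
  set n : ℕ := ⌈T⌉₊ with hn
  set u : ℝ := Y n - 1 - X n with hu
  have hun : (n:ℝ) ≤ u := by
    rw [hu]
    linarith [hxy n]
  have hu0 : 0 ≤ u := le_trans (Nat.cast_nonneg n) hun
  have hTu : T ≤ u := le_trans (Nat.le_ceil T) hun
  have hlt := hT u hTu
  rw [Real.dist_eq, sub_zero] at hlt
  have hnn : 0 ≤ c0Norm v (translateW u f) := c0Norm_nonneg hpos _
  rw [abs_of_nonneg hnn] at hlt
  -- but the norm at time u is at least 1
  set x' : ℝ := X n + 1/2 with hx'
  have hx'0 : 0 ≤ x' := by rw [hx']; linarith [hx n]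
  have hx'u : x' + u = p n := by
    rw [hx', hu, hp]
    ring
  have hfp : f (p n) = δ n := by
    obtain ⟨m, hm⟩ := hlocal (p n)
    have h1 : f (p n) = tent m (p n) := hm (p n) (by rw [sub_self, abs_zero]; norm_num)
    have hself : tent n (p n) ≠ 0 := by
      rw [htent]
      simp only []
      rw [tentF_self _ hquarter, mul_one]
      exact ne_of_gt (hδpos n)
    by_cases hmn : m = n
    · rw [h1, hmn, htent]
      simp only []
      rw [tentF_self _ hquarter, mul_one]
    · by_cases hzm : tent m (p n) = 0
      · exfalso
        -- f (p n) should be tent n (p n) ≠ 0; derive contradiction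
        have h2 : f (p n) = tent n (p n) := by
          rw [hf]
          refine tsum_eq_single n ?_
          intro k hk
          by_contra hcon
          exact hk (hfar k n (p n) (p n) (by rw [sub_self, abs_zero]; norm_num) hcon hself)
        rw [h1, hzm] at h2
        exact hself h2.symm
      · exact absurd (hfar m n (p n) (p n) (by rw [sub_self, abs_zero]; norm_num) hzm hself)
          hmn
  have hvx' : v (X n) / (M * Real.exp w) ≤ v x' := by
    have hgr := hgrow (X n) (hx n) (1/2) (by norm_num)
    have hexp : Real.exp (w * (1/2)) ≤ Real.exp w := by
      apply Real.exp_le_exp.2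
      nlinarith
    have hvx'0 : 0 < v x' := hpos x' hx'0
    rw [div_le_iff₀ (by positivity)]
    calc v (X n) ≤ M * Real.exp (w * (1/2)) * v (X n + 1/2) := hgr
      _ ≤ M * Real.exp w * v x' := by
          have hM0 : (0:ℝ) ≤ M := le_trans zero_le_one hM
          rw [hx']
          gcongr
      _ = v x' * (M * Real.exp w) := by ring
  have hmemtr : MemC0 v (translateW u f) :=
    MemC0.translate' hpos hM hw hgrow hmemf hu0
  have hbdd : BddAbove (NSet v (translateW u f)) := bddAbove_nset hpos hb hmemtr
  have hle := le_c0Norm (v := v) hbdd hx'0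
  have heval : translateW u f x' = δ n := by
    show f (x' + u) = δ n
    rw [hx'u, hfp]
  have hfinal : 1 ≤ |translateW u f x'| * v x' := by
    rw [heval, abs_of_pos (hδpos n)]
    have hδ1 : δ n * (v (X n) / (M * Real.exp w)) = 1 := by
      show M * Real.exp w / v (X n) * (v (X n) / (M * Real.exp w)) = 1
      rw [div_mul_div_comm]
      rw [div_eq_one_iff_eq (mul_ne_zero (ne_of_gt (hvX n)) (by positivity))]
      ring
    calc (1:ℝ) = δ n * (v (X n) / (M * Real.exp w)) := hδ1.symm
      _ ≤ δ n * v x' := mul_le_mul_of_nonneg_left hvx' (hδpos n).le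
  linarith [le_trans hfinal hle]

end C0Aux
theorem c0_translation_infinite_entropy_tfae
    (v : ℝ → ℝ) (hv : AdmissibleWeight v) :
    List.TFAE
      [ -- (1) sup { v x / v y : 0 ≤ x ≤ y } = ∞
        (∀ B : ℝ, ∃ r ∈ ratioSet v, B < r),
        -- (2) some f ∈ X does not tend to 0 in norm under translation
        (∃ f, MemC0 v f ∧
          ¬ Filter.Tendsto (fun t => c0Norm v (translateW t f)) Filter.atTop (nhds 0)),
        -- (3) 𝒯 is not uniformly bounded
        (¬ ∃ B : ℝ, 0 ≤ B ∧ ∀ f, MemC0 v f → ∀ t, 0 ≤ t →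
          c0Norm v (translateW t f) ≤ B * c0Norm v f),
        -- (4) 𝒯 is not uniformly equicontinuous
        (¬ ∀ ε > (0:ℝ), ∃ δ > (0:ℝ), ∀ t, 0 ≤ t → ∀ f g, MemC0 v f → MemC0 v g →
          c0Norm v (f - g) < δ → c0Norm v (translateW t f - translateW t g) < ε),
        -- (5) 𝒯 is not equicontinuous
        (¬ ∀ ε > (0:ℝ), ∀ f, MemC0 v f → ∃ δ > (0:ℝ), ∀ t, 0 ≤ t → ∀ g, MemC0 v g →
          c0Norm v (f - g) < δ → c0Norm v (translateW t f - translateW t g) < ε),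
        -- (6) 𝒯 has nonzero entropy
        (entropyFam (fun f g => c0Norm v (f - g)) translateW {f | MemC0 v f} ≠ 0),
        -- (7) 𝒯 has infinite entropy
        (entropyFam (fun f g => c0Norm v (f - g)) translateW {f | MemC0 v f} = ⊤) ] := by
  obtain ⟨hpos, hint, M, hM, w, hw, hgrow⟩ := hv
  have hb : ∀ a : ℝ, ∃ C, 0 < C ∧ ∀ x, 0 ≤ x → x ≤ a → v x ≤ C :=
    fun a => C0Aux.vsup hpos hint hM hw hgrow a
  tfae_have 1 → 2 := fun h1 =>
    C0Aux.exists_nonvanishing_orbit hpos hb hM hw hgrow h1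
  tfae_have 2 → 1 := by
    intro h2
    by_contra hn1
    obtain ⟨R, hR0, hR⟩ := C0Aux.ratio_bdd_of_not_one hpos hn1
    obtain ⟨f, hf, hnot⟩ := h2
    exact hnot (C0Aux.orbit_tendsto_zero_of_ratio_bdd hpos hR0 hR hf)
  tfae_have 3 → 1 := by
    intro h3
    by_contra hn1
    obtain ⟨R, hR0, hR⟩ := C0Aux.ratio_bdd_of_not_one hpos hn1
    exact h3 ⟨R, hR0.le, fun f hf t ht => C0Aux.ub_of_ratio_bdd hpos hb hR hf ht⟩
  tfae_have 4 → 3 := by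
    intro h4 hub
    exact h4 (C0Aux.uec_of_ub hpos hub)
  tfae_have 5 → 4 := by
    intro h5 huec
    apply h5
    intro ε hε f hf
    obtain ⟨δ, hδ0, hδ⟩ := huec ε hε
    exact ⟨δ, hδ0, fun t ht g hg => hδ t ht f g hf hg⟩
  tfae_have 6 → 5 := by
    intro h6 hec
    apply h6
    have huec : ∀ ε > (0:ℝ), ∃ δ > (0:ℝ), ∀ t, 0 ≤ t → ∀ f g, MemC0 v f → MemC0 v g →
        c0Norm v (f - g) < δ → c0Norm v (translateW t f - translateW t g) < ε := by
      intro ε hε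
      obtain ⟨δ, hδ0, hδ⟩ := hec ε hε 0 C0Aux.memC0_zero
      refine ⟨δ, hδ0, ?_⟩
      intro t ht f g hf hg hfg
      have hg' : MemC0 v (g - f) := C0Aux.MemC0.sub' hpos hg hf
      have h0g : (0:ℝ→ℝ) - (g - f) = f - g := by rw [zero_sub, neg_sub]
      have hlt : c0Norm v ((0:ℝ→ℝ) - (g - f)) < δ := by rw [h0g]; exact hfg
      have hres := hδ t ht (g - f) hg' hlt
      have heq : translateW t (0:ℝ→ℝ) - translateW t (g - f)
          = translateW t f - translateW t g := by
        calc translateW t (0:ℝ→ℝ) - translateW t (g - f)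
            = translateW t ((0:ℝ→ℝ) - (g - f)) := C0Aux.translate_sub t 0 (g - f)
          _ = translateW t (f - g) := by rw [h0g]
          _ = translateW t f - translateW t g := (C0Aux.translate_sub t f g).symm
      rw [heq] at hres
      exact hres
    have hub := C0Aux.ub_of_uec hpos hb hM hw hgrow huec
    exact C0Aux.entropyFam_zero_of_ub hpos hb hub
  tfae_have 7 → 6 := by
    intro h7
    rw [h7]
    exact EReal.top_ne_zero
  tfae_have 1 → 7 := fun h1 =>
    C0Aux.entropyFam_top_of_one hpos hb hM hw hgrow h1
  tfae_finish
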